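/- arXiv:2310.03601 — 4 statements merged into one kernel-verified Lean document; each statement's English description precedes it below -/
import Mathlib

section
/- Under the standing lifting assumptions (ℓ ≥ 4, A proper with λ ≥ ℓ within A, all edges incident to A, s ∉ A, deg(s) ≥ 4), if I1 and I2 are two distinct maximal independent sets of size at least 2 in L(G,s,τ_A) with corresponding dangerous sets D1, D2, then |I1 ∩ I2| ≤ 1; moreover if |I1 ∩ I2| = 1 and I1 ∪ I2 is not the full vertex set of L(G,s,τ_A), then ℓ is odd. -/
namespace NW
open Classical
noncomputable section

/-- A multigraph on vertex type `V` with edge type `E`: each edge has two endpoints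
(given with an arbitrary reference direction). -/
structure Multigraph (V : Type) (E : Type) where
  fst : E → V
  snd : E → V

namespace Multigraph

variable {V E : Type}

/-- Source of an oriented step `(e, b)`: traversing `e` forwards if `b = true`. -/
def src (G : Multigraph V E) (s : E × Bool) : V := if s.2 then G.fst s.1 else G.snd s.1

/-- Target of an oriented step. -/
def dst (G : Multigraph V E) (s : E × Bool) : V := if s.2 then G.snd s.1 else G.fst s.1

/-- `l` is a walk from `x` to `y` (a list of oriented steps). -/
def IsWalk (G : Multigraph V E) (x y : V) (l : List (E × Bool)) : Prop :=
  l.Chain' (fun s t => G.dst s = G.src t) ∧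
  ((l = [] ∧ x = y) ∨
    (∃ s t, l.head? = some s ∧ l.getLast? = some t ∧ G.src s = x ∧ G.dst t = y))

/-- A trail: a walk with pairwise distinct edges. -/
def IsTrail (G : Multigraph V E) (x y : V) (l : List (E × Bool)) : Prop :=
  G.IsWalk x y l ∧ (l.map Prod.fst).Nodup

/-- There exist `m` pairwise edge-disjoint `x`–`y` paths. -/
def ConnAtLeast (G : Multigraph V E) (x y : V) (m : ℕ) : Prop :=
  ∃ f : Fin m → List (E × Bool),
    (∀ i, G.IsTrail x y (f i)) ∧
    ∀ i j, i ≠ j → ((f i).map Prod.fst).Disjoint ((f j).map Prod.fst)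

/-- The local edge-connectivity `λ(x,y)`. -/
noncomputable def lam (G : Multigraph V E) (x y : V) : ℕ :=
  sSup {m | G.ConnAtLeast x y m}

/-- `λ*(x,y)`: greatest even number not exceeding `λ(x,y)`. -/
noncomputable def lamStar (G : Multigraph V E) (x y : V) : ℕ :=
  2 * (G.lam x y / 2)

/-- Edge boundary `δ(X)`. -/
def cut (G : Multigraph V E) (X : Set V) : Set E :=
  {e | (G.fst e ∈ X ∧ G.snd e ∉ X) ∨ (G.fst e ∉ X ∧ G.snd e ∈ X)}

/-- `E(X,Y)`: edges with one end in `X` and the other in `Y`. -/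
def between (G : Multigraph V E) (X Y : Set V) : Set E :=
  {e | (G.fst e ∈ X ∧ G.snd e ∈ Y) ∨ (G.fst e ∈ Y ∧ G.snd e ∈ X)}

/-- Degree of a vertex. -/
noncomputable def deg (G : Multigraph V E) (v : V) : ℕ :=
  {e | G.fst e = v}.ncard + {e | G.snd e = v}.ncard

/-- `e` is incident with `v`. -/
def Inc (G : Multigraph V E) (e : E) (v : V) : Prop := G.fst e = v ∨ G.snd e = v

/-- `k`-edge-connectedness: every nonempty proper vertex set has boundary of size at least `k`. -/
def EdgeConnected (G : Multigraph V E) (k : ℕ) : Prop :=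
  ∀ X : Set V, X.Nonempty → Xᶜ.Nonempty → k ≤ (G.cut X).ncard

/-- Tail of edge `e` under the orientation `o`. -/
def tailO (G : Multigraph V E) (o : E → Bool) (e : E) : V := if o e then G.fst e else G.snd e

/-- Head of edge `e` under the orientation `o`. -/
def headO (G : Multigraph V E) (o : E → Bool) (e : E) : V := if o e then G.snd e else G.fst e

/-- Directed walk from `x` to `y` in the orientation `o`. -/
def IsDiWalk (G : Multigraph V E) (o : E → Bool) (x y : V) (l : List E) : Prop :=
  l.Chain' (fun e f => G.headO o e = G.tailO o f) ∧
  ((l = [] ∧ x = y) ∨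
    (∃ e f, l.head? = some e ∧ l.getLast? = some f ∧ G.tailO o e = x ∧ G.headO o f = y))

/-- There exist `m` pairwise arc-disjoint directed paths from `x` to `y`. -/
def DiConnAtLeast (G : Multigraph V E) (o : E → Bool) (x y : V) (m : ℕ) : Prop :=
  ∃ g : Fin m → List E,
    (∀ i, G.IsDiWalk o x y (g i) ∧ (g i).Nodup) ∧
    ∀ i j, i ≠ j → (g i).Disjoint (g j)

/-- A well-balanced orientation. -/
def WellBalanced (G : Multigraph V E) (o : E → Bool) : Prop :=
  ∀ x y : V, x ≠ y → G.DiConnAtLeast o x y (G.lamStar x y / 2)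

def Reachable (G : Multigraph V E) (x y : V) : Prop := ∃ l, G.IsWalk x y l

def Connected (G : Multigraph V E) : Prop := ∀ x y, G.Reachable x y

/-- `e` is a bridge: its endpoints cannot be joined avoiding `e`. -/
def IsBridge (G : Multigraph V E) (e : E) : Prop :=
  ¬ ∃ l, G.IsWalk (G.fst e) (G.snd e) l ∧ e ∉ l.map Prod.fst

/-- The endpoint of `e` other than `s`. -/
def other (G : Multigraph V E) (s : V) (e : E) : V :=
  if G.fst e = s then G.snd e else G.fst e

/-- Lifting the edges `e1, e2` at `s`: delete both, add a new edge (reusing the name `e1`)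
joining their other endpoints. -/
def lift (G : Multigraph V E) (s : V) (e1 e2 : E) : Multigraph V {e : E // e ≠ e2} where
  fst := fun e => if e.1 = e1 then G.other s e1 else G.fst e.1
  snd := fun e => if e.1 = e1 then G.other s e2 else G.snd e.1

/-- The pair `e1, e2` at `s` is `τ`-admissible. -/
def Admissible (G : Multigraph V E) (s : V) (τ : V → V → ℕ) (e1 e2 : E) : Prop :=
  ∀ x y : V, x ≠ s → y ≠ s → (G.lift s e1 e2).ConnAtLeast x y (τ x y)

/-- The lifting graph `L(G,s,τ)` on the edges incident with `s`. -/
def LiftingGraph (G : Multigraph V E) (s : V) (τ : V → V → ℕ) :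
    SimpleGraph {e : E // G.Inc e s} where
  Adj e f := e ≠ f ∧ (G.Admissible s τ e.1 f.1 ∨ G.Admissible s τ f.1 e.1)
  symm := ⟨fun _ _ h => ⟨h.1.symm, h.2.symm⟩⟩
  loopless := ⟨fun _ h => h.1 rfl⟩

/-- The target function `τ_A`. -/
def tauA (A : Set V) (ℓ : ℕ) : V → V → ℕ := fun x y => if x ∈ A ∧ y ∈ A then ℓ else 0

/-- `r_τ(D)`. -/
noncomputable def rTau (s : V) (τ : V → V → ℕ) (D : Set V) : ℕ :=
  sSup {m | ∃ a ∈ D, ∃ b, b ∉ D ∧ b ≠ s ∧ τ a b = m}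

/-- A dangerous set with respect to `A` and `ℓ`. -/
def DangerousA (G : Multigraph V E) (A : Set V) (ℓ : ℕ) (D : Set V) : Prop :=
  (D ∩ A).Nonempty ∧ (A \ D).Nonempty ∧ (G.cut D).ncard ≤ ℓ + 1

/-- Independent set in a simple graph. -/
def IndepIn {α : Type} (L : SimpleGraph α) (s : Set α) : Prop :=
  s.Pairwise fun a b => ¬ L.Adj a b

/-- A one-way infinite path (ray). -/
def IsRay (G : Multigraph V E) (r : ℕ → E × Bool) : Prop :=
  (∀ n, G.dst (r n) = G.src (r (n + 1))) ∧ Function.Injective (fun n => G.src (r n))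

def rayVerts (G : Multigraph V E) (r : ℕ → E × Bool) : Set V := {v | ∃ n, G.src (r n) = v}

def rayEdges (r : ℕ → E × Bool) : Set E := {e | ∃ n, (r n).1 = e}

def walkVerts (G : Multigraph V E) (l : List (E × Bool)) : Set V :=
  {v | ∃ s ∈ l, G.src s = v ∨ G.dst s = v}

/-- Two rays are equivalent if there are infinitely many pairwise vertex-disjoint
paths between them. -/
def RayEquiv (G : Multigraph V E) (r1 r2 : ℕ → E × Bool) : Prop :=
  ∃ (P : ℕ → List (E × Bool)) (a b : ℕ → V),
    (∀ n, a n ∈ G.rayVerts r1 ∧ b n ∈ G.rayVerts r2 ∧ G.IsWalk (a n) (b n) (P n)) ∧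
    ∀ m n, m ≠ n →
      Disjoint ({a m, b m} ∪ G.walkVerts (P m)) ({a n, b n} ∪ G.walkVerts (P n))

/-- `B` is boundary-linked: there are pairwise edge-disjoint equivalent rays in
`G[B]` plus its boundary such that every boundary edge is the first edge of one of them. -/
def BoundaryLinked (G : Multigraph V E) (B : Set V) : Prop :=
  ∃ ρ : G.cut B → (ℕ → E × Bool),
    (∀ e, G.IsRay (ρ e) ∧ (ρ e 0).1 = e.1 ∧
      ∀ n, ((ρ e n).1 ∈ G.cut B ∨ (G.fst (ρ e n).1 ∈ B ∧ G.snd (ρ e n).1 ∈ B))) ∧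
    (∀ e f : G.cut B, G.RayEquiv (ρ e) (ρ f)) ∧
    (∀ e f : G.cut B, e ≠ f → Disjoint (rayEdges (ρ e)) (rayEdges (ρ f)))

def LocallyFinite (G : Multigraph V E) : Prop := ∀ v, {e | G.Inc e v}.Finite

/-- Reachability by a walk avoiding the edge set `F`. -/
def ReachAvoidE (G : Multigraph V E) (F : Set E) (x y : V) : Prop :=
  ∃ l, G.IsWalk x y l ∧ ∀ s ∈ l, s.1 ∉ F

/-- The edge set `F` separates `A'` from the end of the ray `r`. -/
def SeparatesEnd (G : Multigraph V E) (F : Set E) (A' : Set V) (r : ℕ → E × Bool) : Prop :=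
  ∃ N, ∀ n, N ≤ n → ∀ a ∈ A', ¬ G.ReachAvoidE F a (G.src (r n))

/-- Reachability by a walk avoiding the vertex set `A`. -/
def ReachAvoidV (G : Multigraph V E) (A : Set V) (x y : V) : Prop :=
  x ∉ A ∧ y ∉ A ∧ ∃ l, G.IsWalk x y l ∧ Disjoint (G.walkVerts l) A

/-- `B` is a connected component of `G - A`. -/
def IsComponentOutside (G : Multigraph V E) (A B : Set V) : Prop :=
  ∃ v, v ∉ A ∧ B = {w | G.ReachAvoidV A v w}

/-- A bond: a minimal edge cut. -/
def IsBond (G : Multigraph V E) (F : Set E) : Prop :=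
  (∃ Y : Set V, Y.Nonempty ∧ Yᶜ.Nonempty ∧ F = G.cut Y) ∧
  ∀ F' : Set E, F' ⊂ F → ¬ ∃ Y : Set V, Y.Nonempty ∧ Yᶜ.Nonempty ∧ F' = G.cut Y

/-- A spanning tree given by an edge set `T`: the subgraph `(V, T)` is connected
and contains no closed trail. -/
def IsSpanningTree (G : Multigraph V E) (T : Set E) : Prop :=
  (∀ x y : V, ∃ l, G.IsWalk x y l ∧ ∀ s ∈ l, s.1 ∈ T) ∧
  ∀ (v : V) (l : List (E × Bool)), l ≠ [] → G.IsTrail v v l → (∀ s ∈ l, s.1 ∈ T) → False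

end Multigraph

end
end NW

open NW NW.Multigraph


section StmtEightHelpers
open NW NW.Multigraph Classical

variable {V E : Type}

/-- An oriented step whose source is in `X` and destination outside `X` is a cut edge. -/
lemma step_cut (G : Multigraph V E) {X : Set V} {p : E × Bool}
    (h1 : G.src p ∈ X) (h2 : G.dst p ∉ X) : p.1 ∈ G.cut X := by
  rcases p with ⟨e, b⟩
  by_cases hb : b <;>
    simp only [Multigraph.src, Multigraph.dst, hb, if_true, if_false] at h1 h2 <;>
    simp only [Multigraph.cut, Set.mem_setOf_eq]
  · exact Or.inl ⟨h1, h2⟩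
  · exact Or.inr ⟨h2, h1⟩

/-- A walk from inside `X` to outside `X` uses a cut edge. -/
lemma walk_crosses (G : Multigraph V E) {X : Set V} :
    ∀ (l : List (E × Bool)) (x y : V), G.IsWalk x y l → x ∈ X → y ∉ X →
      ∃ p ∈ l, p.1 ∈ G.cut X := by
  intro l
  induction l with
  | nil =>
      intro x y hw hx hy
      rcases hw.2 with ⟨-, rfl⟩ | ⟨p, t, hp, -⟩
      · exact absurd hx hy
      · simp at hp
  | cons p l ih =>
      intro x y hw hx hy
      rcases hw.2 with ⟨h, -⟩ | ⟨p', t, hp', ht, hsrc, hdst⟩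
      · simp at h
      · have hp : p' = p := by simpa using hp'.symm
        rw [hp] at hsrc
        by_cases hd : G.dst p ∈ X
        · -- continue along the rest of the walk
          cases l with
          | nil =>
              have : t = p := by simpa using ht.symm
              rw [this] at hdst
              exact absurd (hdst ▸ hd) hy
          | cons q l' =>
              have hch := hw.1
              simp only [List.Chain', List.isChain_cons_cons] at hch
              have hwalk : G.IsWalk (G.dst p) y (q :: l') := by
                refine ⟨hch.2, Or.inr ⟨q, t, rfl, ?_, hch.1.symm, hdst⟩⟩
                simpa [List.getLast?_cons_cons] using ht
              obtain ⟨r, hr, hrc⟩ := ih (G.dst p) y hwalk hd hy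
              exact ⟨r, List.mem_cons_of_mem _ hr, hrc⟩
        · exact ⟨p, List.mem_cons_self, step_cut G (hsrc ▸ hx) hd⟩

/-- Menger-easy direction: local edge-connectivity is at most any cut size. -/
lemma mincut {E' : Type} [Finite E'] (G : Multigraph V E') {x y : V} {m : ℕ} {X : Set V}
    (h : G.ConnAtLeast x y m) (hx : x ∈ X) (hy : y ∉ X) : m ≤ (G.cut X).ncard := by
  obtain ⟨f, htr, hdisj⟩ := h
  choose p hp hpcut using fun i => walk_crosses G (f i) x y (htr i).1 hx hy
  have hF : Function.Injective (fun i : Fin m => (⟨(p i).1, hpcut i⟩ : G.cut X)) := by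
    intro i j hij
    by_contra hne
    have hij' : (p i).1 = (p j).1 := congrArg Subtype.val hij
    exact hdisj i j hne (List.mem_map_of_mem (hp i))
      (hij' ▸ List.mem_map_of_mem (hp j))
  haveI : Fintype (G.cut X) := Fintype.ofFinite _
  calc m = Fintype.card (Fin m) := (Fintype.card_fin m).symm
    _ ≤ Fintype.card (G.cut X) := Fintype.card_le_of_injective _ hF
    _ = Nat.card (G.cut X) := Nat.card_eq_fintype_card.symm
    _ = (G.cut X).ncard := (Nat.card_coe_set_eq _)

lemma ncard_eq_sum {E' : Type} [Fintype E'] (S : Set E') :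
    S.ncard = ∑ e : E', if e ∈ S then 1 else 0 := by
  classical
  rw [Set.ncard_eq_toFinset_card' S, ← Set.filter_mem_univ_eq_toFinset, Finset.card_filter]

lemma even_nat_sum {ι : Type} {s : Finset ι} {f : ι → ℕ} (h : ∀ i ∈ s, Even (f i)) :
    Even (∑ i ∈ s, f i) := by
  classical
  induction s using Finset.cons_induction with
  | empty => simp
  | cons a s ha ih =>
      rw [Finset.sum_cons]
      exact (h a (Finset.mem_cons_self a s)).add (ih fun i hi => h i (Finset.mem_cons_of_mem hi))

lemma cut_submod1 {E' : Type} [Fintype E'] (G : Multigraph V E') (X Y : Set V) :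
    (G.cut (X \ Y)).ncard + (G.cut (Y \ X)).ncard
      + 2 * (G.between (X ∩ Y) ((X ∪ Y)ᶜ)).ncard
      ≤ (G.cut X).ncard + (G.cut Y).ncard := by
  classical
  simp only [ncard_eq_sum, Finset.mul_sum, ← Finset.sum_add_distrib]
  apply Finset.sum_le_sum
  intro e _
  by_cases h1 : G.fst e ∈ X <;> by_cases h2 : G.snd e ∈ X <;>
    by_cases h3 : G.fst e ∈ Y <;> by_cases h4 : G.snd e ∈ Y <;>
    simp [Multigraph.cut, Multigraph.between, Set.mem_setOf_eq, Set.mem_diff,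
      Set.mem_inter_iff, Set.mem_union, Set.mem_compl_iff, h1, h2, h3, h4]

lemma cut_submod2 {E' : Type} [Fintype E'] (G : Multigraph V E') (X Y : Set V) :
    (G.cut (X ∩ Y)).ncard + (G.cut (X ∪ Y)).ncard
      ≤ (G.cut X).ncard + (G.cut Y).ncard := by
  classical
  simp only [ncard_eq_sum, ← Finset.sum_add_distrib]
  apply Finset.sum_le_sum
  intro e _
  by_cases h1 : G.fst e ∈ X <;> by_cases h2 : G.snd e ∈ X <;>
    by_cases h3 : G.fst e ∈ Y <;> by_cases h4 : G.snd e ∈ Y <;>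
    simp [Multigraph.cut, Set.mem_setOf_eq, Set.mem_inter_iff, Set.mem_union, h1, h2, h3, h4]

lemma cut_parity {E' : Type} [Fintype E'] (G : Multigraph V E') (X Y : Set V) :
    Even ((G.cut (X ∩ Y)).ncard + (G.cut X).ncard + (G.cut (X \ Y)).ncard) := by
  classical
  simp only [ncard_eq_sum, ← Finset.sum_add_distrib]
  apply even_nat_sum
  intro e _
  by_cases h1 : G.fst e ∈ X <;> by_cases h2 : G.snd e ∈ X <;>
    by_cases h3 : G.fst e ∈ Y <;> by_cases h4 : G.snd e ∈ Y <;>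
    simp [Multigraph.cut, Set.mem_setOf_eq, Set.mem_inter_iff, Set.mem_diff, h1, h2, h3, h4]

lemma other_mem_cut (G : Multigraph V E) {s : V} {D : Set V} {e : E}
    (he : G.Inc e s) (hsD : s ∉ D) (hD : G.other s e ∈ D) : e ∈ G.cut D := by
  simp only [Multigraph.cut, Set.mem_setOf_eq]
  unfold Multigraph.other at hD
  by_cases hf : G.fst e = s
  · rw [if_pos hf] at hD
    exact Or.inr ⟨fun h => hsD (hf ▸ h), hD⟩
  · rw [if_neg hf] at hD
    rcases he with h | h
    · exact absurd h hf
    · exact Or.inl ⟨hD, fun hh => hsD (h ▸ hh)⟩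

lemma lift_cut_bound {E' : Type} [Finite E'] (G : Multigraph V E') {s : V} {e1 e2 : E'} {D : Set V}
    (h12 : e1 ≠ e2) (hc1 : e1 ∈ G.cut D) (hc2 : e2 ∈ G.cut D)
    (ho1 : G.other s e1 ∈ D) (ho2 : G.other s e2 ∈ D) :
    ((G.lift s e1 e2).cut D).ncard + 2 ≤ (G.cut D).ncard := by
  have hsub : ∀ e' ∈ (G.lift s e1 e2).cut D,
      (Subtype.val e') ∈ G.cut D \ {e1, e2} := by
    intro e' he'
    simp only [Multigraph.cut, Multigraph.lift, Set.mem_setOf_eq] at he'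
    by_cases h : e'.1 = e1
    · rw [if_pos h, if_pos h] at he'
      rcases he' with ⟨-, hbad⟩ | ⟨hbad, -⟩
      · exact absurd ho2 hbad
      · exact absurd ho1 hbad
    · rw [if_neg h, if_neg h] at he'
      exact ⟨he', by simp [h, e'.2]⟩
  have h1 : ((G.lift s e1 e2).cut D).ncard ≤ (G.cut D \ {e1, e2}).ncard :=
    Set.ncard_le_ncard_of_injOn Subtype.val hsub (Subtype.val_injective.injOn) (Set.toFinite _)
  have hpair : ({e1, e2} : Set E') ⊆ G.cut D := by
    rintro x (rfl | rfl)
    · exact hc1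
    · exact hc2
  have h2 : (G.cut D \ {e1, e2}).ncard = (G.cut D).ncard - 2 := by
    rw [Set.ncard_diff hpair (Set.toFinite _), Set.ncard_pair h12]
  have h3 : 2 ≤ (G.cut D).ncard := by
    rw [← Set.ncard_pair h12]
    exact Set.ncard_le_ncard hpair (Set.toFinite _)
  omega

lemma dangerous_indep [Finite E] (G : Multigraph V E) {A : Set V} {ℓ : ℕ} {s : V} {D : Set V}
    (hsA : s ∉ A) (hsD : s ∉ D)
    (hx : (D ∩ A).Nonempty) (hy : (A \ D).Nonempty)
    (hbound : (G.cut D).ncard ≤ ℓ + 1) :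
    Multigraph.IndepIn (G.LiftingGraph s (Multigraph.tauA A ℓ))
      {e : {e : E // G.Inc e s} | G.other s e.1 ∈ D} := by
  intro e he f hf hnef hadj
  obtain ⟨x, hxD, hxA⟩ := hx
  obtain ⟨y, hyA, hyD⟩ := hy
  have hxs : x ≠ s := fun h => hsA (h ▸ hxA)
  have hys : y ≠ s := fun h => hsA (h ▸ hyA)
  have hval : e.1 ≠ f.1 := fun h => hnef (Subtype.ext h)
  have hce := other_mem_cut G e.2 hsD he
  have hcf := other_mem_cut G f.2 hsD hf
  have htau : Multigraph.tauA A ℓ x y = ℓ := if_pos ⟨hxA, hyA⟩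
  have hadj' : e ≠ f ∧ (G.Admissible s (Multigraph.tauA A ℓ) e.1 f.1 ∨
      G.Admissible s (Multigraph.tauA A ℓ) f.1 e.1) := hadj
  rcases hadj'.2 with hadm | hadm
  · have hconn := hadm x y hxs hys
    rw [htau] at hconn
    have hb1 := mincut _ hconn hxD hyD
    have hb2 := lift_cut_bound G hval hce hcf he hf
    omega
  · have hconn := hadm x y hxs hys
    rw [htau] at hconn
    have hb1 := mincut _ hconn hxD hyD
    have hb2 := lift_cut_bound G hval.symm hcf hce hf he
    omega

end StmtEightHelpers

open NW in
/-- Two distinct maximal independent sets of the lifting graph with corresponding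
dangerous sets intersect in at most one vertex; if in exactly one and their union is
not everything, then ℓ is odd. -/
theorem stmt8 {V E : Type} [Finite V] [Finite E] (G : Multigraph V E)
    (ℓ : ℕ) (hl : 4 ≤ ℓ)
    (A : Set V) (hA : A ≠ Set.univ)
    (hconnA : ∀ x y, x ∈ A → y ∈ A → G.ConnAtLeast x y ℓ)
    (hedge : ∀ e, G.fst e ∈ A ∨ G.snd e ∈ A)
    (hloop : ∀ e, G.fst e ≠ G.snd e)
    (s : V) (hs : s ∉ A)
    (hbridge : ∀ e, G.Inc e s → ¬ G.IsBridge e)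
    (hdeg : 4 ≤ G.deg s)
    (I1 I2 : Set {e : E // G.Inc e s}) (hne : I1 ≠ I2)
    (hI1 : Multigraph.IndepIn (G.LiftingGraph s (Multigraph.tauA A ℓ)) I1)
    (hI2 : Multigraph.IndepIn (G.LiftingGraph s (Multigraph.tauA A ℓ)) I2)
    (hmax1 : ∀ J, Multigraph.IndepIn (G.LiftingGraph s (Multigraph.tauA A ℓ)) J →
      I1 ⊆ J → J = I1)
    (hmax2 : ∀ J, Multigraph.IndepIn (G.LiftingGraph s (Multigraph.tauA A ℓ)) J →
      I2 ⊆ J → J = I2)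
    (hs1 : 2 ≤ I1.ncard) (hs2 : 2 ≤ I2.ncard)
    (D1 D2 : Set V)
    (hD1 : G.DangerousA A ℓ D1) (hD2 : G.DangerousA A ℓ D2)
    (hsD1 : s ∉ D1) (hsD2 : s ∉ D2)
    (hI1D1 : ∀ e : {e : E // G.Inc e s}, e ∈ I1 ↔ G.other s e.1 ∈ D1)
    (hI2D2 : ∀ e : {e : E // G.Inc e s}, e ∈ I2 ↔ G.other s e.1 ∈ D2) :
    (I1 ∩ I2).ncard ≤ 1 ∧
      (((I1 ∩ I2).ncard = 1 ∧ I1 ∪ I2 ≠ Set.univ) → Odd ℓ) := by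
  haveI : Fintype E := Fintype.ofFinite E
  -- the other endpoint of an edge at s lies in A
  have hoA : ∀ e : {e : E // G.Inc e s}, G.other s e.1 ∈ A := by
    intro e
    unfold Multigraph.other
    by_cases hf : G.fst e.1 = s
    · rw [if_pos hf]
      rcases hedge e.1 with h | h
      · exact absurd (hf ▸ h) hs
      · exact h
    · rw [if_neg hf]
      rcases e.2 with h | h
      · exact absurd h hf
      · rcases hedge e.1 with h' | h'
        · exact h'
        · exact absurd (h ▸ h') hs
  have hlow : ∀ D : Set V, (D ∩ A).Nonempty → (A \ D).Nonempty → ℓ ≤ (G.cut D).ncard := by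
    rintro D ⟨x, hxD, hxA⟩ ⟨y, hyA, hyD⟩
    exact mincut G (hconnA x y hxA hyA) hxD hyD
  have hd1 : (G.cut D1).ncard ≤ ℓ + 1 := hD1.2.2
  have hd2 : (G.cut D2).ncard ≤ ℓ + 1 := hD2.2.2
  have hns12 : ¬ I1 ⊆ I2 := fun h => hne (hmax1 I2 hI2 h).symm
  have hns21 : ¬ I2 ⊆ I1 := fun h => hne (hmax2 I1 hI1 h)
  obtain ⟨a1, ha1, ha1'⟩ := Set.not_subset.mp hns12
  obtain ⟨a2, ha2, ha2'⟩ := Set.not_subset.mp hns21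
  -- a1 ∈ I1 \ I2, a2 ∈ I2 \ I1
  have ho1D1 : G.other s a1.1 ∈ D1 := (hI1D1 a1).mp ha1
  have ho1D2 : G.other s a1.1 ∉ D2 := fun h => ha1' ((hI2D2 a1).mpr h)
  have ho2D2 : G.other s a2.1 ∈ D2 := (hI2D2 a2).mp ha2
  have ho2D1 : G.other s a2.1 ∉ D1 := fun h => ha2' ((hI1D1 a2).mpr h)
  -- membership in the between set for common edges
  have hbet : ∀ e : {e : E // G.Inc e s}, G.other s e.1 ∈ D1 ∩ D2 →
      e.1 ∈ G.between (D1 ∩ D2) ((D1 ∪ D2)ᶜ) := by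
    intro e heD
    have hscomp : s ∈ (D1 ∪ D2)ᶜ := by
      simp only [Set.mem_compl_iff, Set.mem_union]
      exact fun h => h.elim hsD1 hsD2
    simp only [Multigraph.between, Set.mem_setOf_eq]
    unfold Multigraph.other at heD
    by_cases hf : G.fst e.1 = s
    · rw [if_pos hf] at heD
      exact Or.inr ⟨by rw [hf]; exact hscomp, heD⟩
    · rw [if_neg hf] at heD
      rcases e.2 with h | h
      · exact absurd h hf
      · exact Or.inl ⟨heD, by rw [h]; exact hscomp⟩
  -- lower bounds for the two difference sets, given any common edge
  have hdiffs : ∀ e : {e : E // G.Inc e s}, e ∈ I1 ∩ I2 →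
      ℓ ≤ (G.cut (D1 \ D2)).ncard ∧ ℓ ≤ (G.cut (D2 \ D1)).ncard ∧
        ℓ ≤ (G.cut (D1 ∩ D2)).ncard := by
    rintro e ⟨he1, he2⟩
    have heD1 : G.other s e.1 ∈ D1 := (hI1D1 e).mp he1
    have heD2 : G.other s e.1 ∈ D2 := (hI2D2 e).mp he2
    refine ⟨hlow _ ⟨G.other s a1.1, ⟨ho1D1, ho1D2⟩, hoA a1⟩
        ⟨G.other s e.1, hoA e, fun h => h.2 heD2⟩,
      hlow _ ⟨G.other s a2.1, ⟨ho2D2, ho2D1⟩, hoA a2⟩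
        ⟨G.other s e.1, hoA e, fun h => h.2 heD1⟩,
      hlow _ ⟨G.other s e.1, ⟨heD1, heD2⟩, hoA e⟩
        ⟨G.other s a1.1, hoA a1, fun h => ho1D2 h.2⟩⟩
  have hsub1 := cut_submod1 G D1 D2
  -- Part 1
  have part1 : (I1 ∩ I2).ncard ≤ 1 := by
    by_contra hbig
    push_neg at hbig
    obtain ⟨a, ha, b, hb, hab⟩ := (Set.one_lt_ncard (Set.toFinite _)).mp hbig
    obtain ⟨hl1, hl2, -⟩ := hdiffs a ha
    have habE : a.1 ≠ b.1 := fun h => hab (Subtype.ext h)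
    have hpair : ({a.1, b.1} : Set E) ⊆ G.between (D1 ∩ D2) ((D1 ∪ D2)ᶜ) := by
      rintro x (rfl | rfl)
      · exact hbet a ⟨(hI1D1 a).mp ha.1, (hI2D2 a).mp ha.2⟩
      · exact hbet b ⟨(hI1D1 b).mp hb.1, (hI2D2 b).mp hb.2⟩
    have hq : 2 ≤ (G.between (D1 ∩ D2) ((D1 ∪ D2)ᶜ)).ncard := by
      rw [← Set.ncard_pair habE]
      exact Set.ncard_le_ncard hpair (Set.toFinite _)
    omega
  refine ⟨part1, ?_⟩
  rintro ⟨hc1, hunion⟩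
  by_contra hodd
  have heven : Even ℓ := Nat.not_odd_iff_even.mp hodd
  obtain ⟨e0, he0⟩ := Set.ncard_eq_one.mp hc1
  have he0mem : e0 ∈ I1 ∩ I2 := he0 ▸ rfl
  obtain ⟨hl1, hl2, hlint⟩ := hdiffs e0 he0mem
  have he0D1 : G.other s e0.1 ∈ D1 := (hI1D1 e0).mp he0mem.1
  have he0D2 : G.other s e0.1 ∈ D2 := (hI2D2 e0).mp he0mem.2
  obtain ⟨f, hf⟩ := (Set.ne_univ_iff_exists_notMem _).mp hunion
  have hfD1 : G.other s f.1 ∉ D1 := fun h => hf (Or.inl ((hI1D1 f).mpr h))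
  have hfD2 : G.other s f.1 ∉ D2 := fun h => hf (Or.inr ((hI2D2 f).mpr h))
  have hq : 1 ≤ (G.between (D1 ∩ D2) ((D1 ∪ D2)ᶜ)).ncard := by
    have : e0.1 ∈ G.between (D1 ∩ D2) ((D1 ∪ D2)ᶜ) := hbet e0 ⟨he0D1, he0D2⟩
    have := Set.ncard_pos (Set.toFinite _) |>.mpr ⟨_, this⟩
    omega
  -- from submodularity 1: cuts of D1 and D2 are exactly ℓ+1, diffs exactly ℓ
  have hcut1 : (G.cut D1).ncard = ℓ + 1 := by omega
  have hdiff1 : (G.cut (D1 \ D2)).ncard = ℓ := by omega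
  -- parity forces the cut of the intersection to exceed ℓ
  have hpar := cut_parity G D1 D2
  have hintodd : ℓ + 1 ≤ (G.cut (D1 ∩ D2)).ncard := by
    obtain ⟨r, hr⟩ := heven
    obtain ⟨t, ht⟩ := hpar
    omega
  have hsub2 := cut_submod2 G D1 D2
  have hcutu : (G.cut (D1 ∪ D2)).ncard ≤ ℓ + 1 := by omega
  -- D1 ∪ D2 is dangerous, so the edges into it form an independent set
  have hiu : Multigraph.IndepIn (G.LiftingGraph s (Multigraph.tauA A ℓ))
      {e : {e : E // G.Inc e s} | G.other s e.1 ∈ D1 ∪ D2} := by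
    refine dangerous_indep G hs (fun h => h.elim hsD1 hsD2)
      ⟨G.other s e0.1, Or.inl he0D1, hoA e0⟩
      ⟨G.other s f.1, hoA f, fun h => h.elim hfD1 hfD2⟩ hcutu
  have hI1sub : I1 ⊆ {e : {e : E // G.Inc e s} | G.other s e.1 ∈ D1 ∪ D2} :=
    fun e he => Or.inl ((hI1D1 e).mp he)
  have heq := hmax1 _ hiu hI1sub
  have hI2sub : I2 ⊆ I1 := by
    intro e he
    have : e ∈ {e : {e : E // G.Inc e s} | G.other s e.1 ∈ D1 ∪ D2} :=
      Or.inr ((hI2D2 e).mp he)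
    exact heq ▸ this
  exact hne (hmax2 I1 hI1 hI2sub)
end

section
/- In a finite multigraph, if after lifting an admissible pair of edges {e1, e2} at a vertex s the pair {e3, e4} becomes admissible, then {e3, e4} was already admissible in the original graph. -/
open NW NW.Multigraph


namespace NW.Multigraph
open Classical

variable {V F1 F2 : Type}

lemma lift_fst' (G : Multigraph V F1) (s : V) (a b : F1) (e : {e : F1 // e ≠ b}) :
    (G.lift s a b).fst e = if e.1 = a then G.other s a else G.fst e.1 := rfl

lemma lift_snd' (G : Multigraph V F1) (s : V) (a b : F1) (e : {e : F1 // e ≠ b}) :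
    (G.lift s a b).snd e = if e.1 = a then G.other s b else G.snd e.1 := rfl

lemma isWalk_single (K : Multigraph V F2) (st : F2 × Bool) :
    K.IsWalk (K.src st) (K.dst st) [st] :=
  ⟨List.isChain_singleton st, Or.inr ⟨st, st, rfl, rfl, rfl, rfl⟩⟩

lemma isWalk_cons {H : Multigraph V F1} {st : F1 × Bool} {l : List (F1 × Bool)} {x y : V}
    (h : H.IsWalk x y (st :: l)) : H.src st = x ∧ H.IsWalk (H.dst st) y l := by
  obtain ⟨hc, hor⟩ := h
  rcases hor with ⟨h0, _⟩ | ⟨a, b, hh, hl, hsx, hdy⟩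
  · exact absurd h0 (List.cons_ne_nil _ _)
  · simp only [List.head?_cons, Option.some.injEq] at hh
    subst hh
    unfold List.Chain' at hc; rw [List.isChain_cons] at hc
    refine ⟨hsx, hc.2, ?_⟩
    cases l with
    | nil =>
      left
      simp only [List.getLast?_singleton, Option.some.injEq] at hl
      subst hl; exact ⟨rfl, hdy⟩
    | cons r rs =>
      right
      refine ⟨r, b, rfl, ?_, ?_, hdy⟩
      · rw [← hl, List.getLast?_cons_cons]
      · exact (hc.1 r rfl).symm

lemma isWalk_append {K : Multigraph V F2} {x y z : V} {l1 l2 : List (F2 × Bool)}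
    (h1 : K.IsWalk x y l1) (h2 : K.IsWalk y z l2) : K.IsWalk x z (l1 ++ l2) := by
  obtain ⟨c1, o1⟩ := h1
  obtain ⟨c2, o2⟩ := h2
  rcases o1 with ⟨rfl, rfl⟩ | ⟨a, b, hh1, hl1, hs1, hd1⟩
  · exact ⟨by simpa using c2, by simpa using o2⟩
  rcases o2 with ⟨rfl, rfl⟩ | ⟨a2, b2, hh2, hl2, hs2, hd2⟩
  · rw [List.append_nil]; exact ⟨c1, Or.inr ⟨a, b, hh1, hl1, hs1, hd1⟩⟩
  constructor
  · unfold List.Chain'; rw [List.isChain_append]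
    refine ⟨c1, c2, ?_⟩
    intro p hp q hq
    rw [hl1, Option.mem_def, Option.some.injEq] at hp
    rw [hh2, Option.mem_def, Option.some.injEq] at hq
    subst hp; subst hq
    rw [hd1, hs2]
  · right
    refine ⟨a, b2, ?_, ?_, hs1, hd2⟩
    · rw [List.head?_append, hh1]; rfl
    · rw [List.getLast?_append, hl2]; rfl

lemma isWalk_flatMap {H : Multigraph V F1} {K : Multigraph V F2}
    {R : F1 × Bool → List (F2 × Bool)}
    (hR : ∀ st, K.IsWalk (H.src st) (H.dst st) (R st)) :
    ∀ {l : List (F1 × Bool)} {x y : V}, H.IsWalk x y l → K.IsWalk x y (l.flatMap R)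
  | [], x, y, h => by
      obtain ⟨_, h⟩ := h
      rcases h with ⟨_, rfl⟩ | ⟨a, b, hh, _, _, _⟩
      · exact ⟨List.isChain_nil, Or.inl ⟨rfl, rfl⟩⟩
      · simp at hh
  | st :: l, x, y, h => by
      obtain ⟨hsx, hrest⟩ := isWalk_cons h
      rw [List.flatMap_cons]
      exact isWalk_append (hsx ▸ hR st) (isWalk_flatMap hR hrest)

lemma nodup_flatMap' {α β : Type} : ∀ (l : List α) (g : α → List β),
    (∀ a ∈ l, (g a).Nodup) →
    (∀ a ∈ l, ∀ b ∈ l, a ≠ b → (g a).Disjoint (g b)) → l.Nodup → (l.flatMap g).Nodup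
  | [], g, _, _, _ => by simp
  | a :: l, g, h1, h2, hl => by
      rw [List.flatMap_cons]
      refine List.Nodup.append (h1 a (by simp)) ?_ ?_
      · exact nodup_flatMap' l g (fun b hb => h1 b (by simp [hb]))
          (fun b hb c hc => h2 b (by simp [hb]) c (by simp [hc])) (List.Nodup.of_cons hl)
      · intro x hx hx'
        rw [List.mem_flatMap] at hx'
        obtain ⟨b, hb, hxb⟩ := hx'
        have hab : a ≠ b := fun h => (List.nodup_cons.mp hl).1 (h ▸ hb)
        exact h2 a (by simp) b (by simp [hb]) hab hx hxb

lemma transfer {H : Multigraph V F1} {K : Multigraph V F2}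
    (R : F1 × Bool → List (F2 × Bool)) (ed : F1 → List F2)
    (hwalk : ∀ st, K.IsWalk (H.src st) (H.dst st) (R st))
    (hmem : ∀ st z, z ∈ (R st).map Prod.fst ↔ z ∈ ed st.1)
    (hRnodup : ∀ st, ((R st).map Prod.fst).Nodup)
    (hdisj : ∀ e e', e ≠ e' → (ed e).Disjoint (ed e'))
    {x y : V} {m : ℕ} (h : H.ConnAtLeast x y m) : K.ConnAtLeast x y m := by
  obtain ⟨f, hf, hdis⟩ := h
  refine ⟨fun i => (f i).flatMap R, fun i => ?_, fun i j hij z hz hz' => ?_⟩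
  · refine ⟨isWalk_flatMap hwalk (hf i).1, ?_⟩
    rw [List.map_flatMap]
    have hnd : ((f i).map Prod.fst).Nodup := (hf i).2
    have hpw : (f i).Pairwise (fun a b => a.1 ≠ b.1) := List.pairwise_map.mp hnd
    refine nodup_flatMap' _ _ (fun a _ => hRnodup a) ?_ (List.Nodup.of_map _ hnd)
    · intro a ha b hb hab z hz hz'
      have h1 : z ∈ ed a.1 := (hmem a z).mp hz
      have h2 : z ∈ ed b.1 := (hmem b z).mp hz'
      have hsymm : Symmetric (fun (a b : F1 × Bool) => a.1 ≠ b.1) := fun _ _ h => h.symm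
      have hne : a.1 ≠ b.1 := (haveI : Std.Symm (fun (a b : F1 × Bool) => a.1 ≠ b.1) := ⟨hsymm⟩; hpw.forall ha hb hab)
      exact hdisj a.1 b.1 hne h1 h2
  · rw [List.map_flatMap, List.mem_flatMap] at hz hz'
    obtain ⟨a, ha, hza⟩ := hz
    obtain ⟨b, hb, hzb⟩ := hz'
    have h1 : z ∈ ed a.1 := (hmem a z).mp hza
    have h2 : z ∈ ed b.1 := (hmem b z).mp hzb
    by_cases hab : a.1 = b.1
    · exact hdis i j hij (List.mem_map_of_mem (f := Prod.fst) ha)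
        (hab ▸ List.mem_map_of_mem (f := Prod.fst) hb)
    · exact hdisj a.1 b.1 hab h1 h2

end NW.Multigraph

open NW in
/-- If after lifting the admissible pair {e1,e2} the pair {e3,e4} is admissible,
then {e3,e4} was admissible already in the original graph. -/
theorem stmt9 {V E : Type} [Finite V] [Finite E] (G : Multigraph V E) (s : V)
    (τ : V → V → ℕ)
    (hloop : ∀ e, G.fst e ≠ G.snd e)
    (e1 e2 e3 e4 : E)
    (h1 : G.Inc e1 s) (h2 : G.Inc e2 s) (h3 : G.Inc e3 s) (h4 : G.Inc e4 s)
    (h12 : e1 ≠ e2) (h13 : e1 ≠ e3) (h14 : e1 ≠ e4)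
    (h23 : e2 ≠ e3) (h24 : e2 ≠ e4) (h34 : e3 ≠ e4)
    (hadm12 : G.Admissible s τ e1 e2)
    (hadm34 : (G.lift s e1 e2).Admissible s τ ⟨e3, h23.symm⟩ ⟨e4, h24.symm⟩) :
    G.Admissible s τ e3 e4 := by
  classical
  intro x y hx hy
  have hcon := hadm34 x y hx hy
  -- notation
  let F1 := {ε : {e : E // e ≠ e2} // ε ≠ (⟨e4, h24.symm⟩ : {e : E // e ≠ e2})}
  let A : {e : E // e ≠ e4} := ⟨e1, h14⟩
  let B : {e : E // e ≠ e4} := ⟨e2, h24⟩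
  let φ : F1 → {e : E // e ≠ e4} := fun ε => ⟨ε.1.1, fun h => ε.2 (Subtype.ext h)⟩
  let bA : Bool := if G.fst e1 = s then false else true
  let bB : Bool := if G.fst e2 = s then true else false
  let stepA : {e : E // e ≠ e4} × Bool := (A, bA)
  let stepB : {e : E // e ≠ e4} × Bool := (B, bB)
  let R : F1 × Bool → List ({e : E // e ≠ e4} × Bool) :=
    fun st => if st.1.1.1 = e1 then
      (if st.2 then [stepA, stepB] else [(B, !bB), (A, !bA)]) else [(φ st.1, st.2)]
  let ed : F1 → List {e : E // e ≠ e4} := fun ε => if ε.1.1 = e1 then [A, B] else [φ ε]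
  set K := G.lift s e3 e4 with hKdef
  set H := (G.lift s e1 e2).lift s (⟨e3, h23.symm⟩ : {e : E // e ≠ e2}) ⟨e4, h24.symm⟩
    with hHdef
  -- endpoints of A and B in K
  have hKfA : K.fst A = G.fst e1 := by
    simp only [hKdef, Multigraph.lift]; rw [if_neg h13]
  have hKsA : K.snd A = G.snd e1 := by
    simp only [hKdef, Multigraph.lift]; rw [if_neg h13]
  have hKfB : K.fst B = G.fst e2 := by
    simp only [hKdef, Multigraph.lift]; rw [if_neg h23]
  have hKsB : K.snd B = G.snd e2 := by
    simp only [hKdef, Multigraph.lift]; rw [if_neg h23]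
  -- step endpoints
  have srcA : K.src stepA = G.other s e1 := by
    by_cases hfs : G.fst e1 = s <;>
      simp [Multigraph.src, Multigraph.other, stepA, bA, hfs, hKfA, hKsA]
  have dstA : K.dst stepA = s := by
    by_cases hfs : G.fst e1 = s
    · simp [Multigraph.dst, stepA, bA, hfs, hKfA]
    · simp [Multigraph.dst, stepA, bA, hfs, hKsA, h1.resolve_left hfs]
  have srcB : K.src stepB = s := by
    by_cases hfs : G.fst e2 = s
    · simp [Multigraph.src, stepB, bB, hfs, hKfB]
    · simp [Multigraph.src, stepB, bB, hfs, hKsB, h2.resolve_left hfs]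
  have dstB : K.dst stepB = G.other s e2 := by
    by_cases hfs : G.fst e2 = s <;>
      simp [Multigraph.dst, Multigraph.other, stepB, bB, hfs, hKfB, hKsB]
  have src_neg : ∀ (e : {e : E // e ≠ e4}) (b : Bool), K.src (e, !b) = K.dst (e, b) := by
    intro e b; cases b <;> simp [Multigraph.src, Multigraph.dst]
  have dst_neg : ∀ (e : {e : E // e ≠ e4}) (b : Bool), K.dst (e, !b) = K.src (e, b) := by
    intro e b; cases b <;> simp [Multigraph.src, Multigraph.dst]
  -- inner lift facts
  have hG'f3 : (G.lift s e1 e2).fst ⟨e3, h23.symm⟩ = G.fst e3 := by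
    rw [Multigraph.lift_fst', if_neg (fun h => h13 h.symm)]
  have hG's3 : (G.lift s e1 e2).snd ⟨e3, h23.symm⟩ = G.snd e3 := by
    rw [Multigraph.lift_snd', if_neg (fun h => h13 h.symm)]
  have hG'o3 : (G.lift s e1 e2).other s ⟨e3, h23.symm⟩ = G.other s e3 := by
    simp only [Multigraph.other, hG'f3, hG's3]
  have hG'f4 : (G.lift s e1 e2).fst ⟨e4, h24.symm⟩ = G.fst e4 := by
    rw [Multigraph.lift_fst', if_neg (fun h => h14 h.symm)]
  have hG's4 : (G.lift s e1 e2).snd ⟨e4, h24.symm⟩ = G.snd e4 := by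
    rw [Multigraph.lift_snd', if_neg (fun h => h14 h.symm)]
  have hG'o4 : (G.lift s e1 e2).other s ⟨e4, h24.symm⟩ = G.other s e4 := by
    simp only [Multigraph.other, hG'f4, hG's4]
  -- endpoints in H
  have hHf : ∀ ε : F1, H.fst ε =
      if ε.1.1 = e3 then G.other s e3 else if ε.1.1 = e1 then G.other s e1
        else G.fst ε.1.1 := by
    intro ε
    rw [hHdef, Multigraph.lift_fst']
    by_cases h3' : ε.1.1 = e3
    · rw [if_pos (Subtype.ext h3'), if_pos h3', hG'o3]
    · rw [if_neg (fun h => h3' (congrArg Subtype.val h)), if_neg h3',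
        Multigraph.lift_fst']
  have hHs : ∀ ε : F1, H.snd ε =
      if ε.1.1 = e3 then G.other s e4 else if ε.1.1 = e1 then G.other s e2
        else G.snd ε.1.1 := by
    intro ε
    rw [hHdef, Multigraph.lift_snd']
    by_cases h3' : ε.1.1 = e3
    · rw [if_pos (Subtype.ext h3'), if_pos h3', hG'o4]
    · rw [if_neg (fun h => h3' (congrArg Subtype.val h)), if_neg h3',
        Multigraph.lift_snd']
  -- single-edge endpoint agreement
  have hfst : ∀ ε : F1, ε.1.1 ≠ e1 → K.fst (φ ε) = H.fst ε := by
    intro ε he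
    rw [hHf, hKdef, Multigraph.lift_fst']
    by_cases h3' : ε.1.1 = e3
    · rw [if_pos h3', if_pos h3']
    · rw [if_neg h3', if_neg h3', if_neg he]
  have hsnd : ∀ ε : F1, ε.1.1 ≠ e1 → K.snd (φ ε) = H.snd ε := by
    intro ε he
    rw [hHs, hKdef, Multigraph.lift_snd']
    by_cases h3' : ε.1.1 = e3
    · rw [if_pos h3', if_pos h3']
    · rw [if_neg h3', if_neg h3', if_neg he]
  refine Multigraph.transfer R ed ?_ ?_ ?_ ?_ hcon
  · -- hwalk
    rintro ⟨ε, o⟩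
    by_cases he : ε.1.1 = e1
    · have hf : H.fst ε = G.other s e1 := by
        rw [hHf, if_neg (fun h => h13 (he.symm.trans h)), if_pos he]
      have hs : H.snd ε = G.other s e2 := by
        rw [hHs, if_neg (fun h => h13 (he.symm.trans h)), if_pos he]
      cases o with
      | true =>
        have : R (ε, true) = [stepA, stepB] := by simp [R, he]
        rw [this]
        have hsrc : H.src (ε, true) = G.other s e1 := by
          simp [Multigraph.src, hf]
        have hdst : H.dst (ε, true) = G.other s e2 := by
          simp [Multigraph.dst, hs]
        rw [hsrc, hdst]
        exact ⟨List.isChain_pair.mpr (dstA.trans srcB.symm),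
          Or.inr ⟨stepA, stepB, rfl, by simp, srcA, dstB⟩⟩
      | false =>
        have : R (ε, false) = [(B, !bB), (A, !bA)] := by simp [R, he]
        rw [this]
        have hsrc : H.src (ε, false) = G.other s e2 := by
          simp [Multigraph.src, hs]
        have hdst : H.dst (ε, false) = G.other s e1 := by
          simp [Multigraph.dst, hf]
        rw [hsrc, hdst]
        refine ⟨List.isChain_pair.mpr ?_, Or.inr ⟨(B, !bB), (A, !bA), rfl, by simp, ?_, ?_⟩⟩
        · rw [dst_neg B bB, src_neg A bA, srcB, dstA]
        · rw [src_neg B bB, dstB]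
        · rw [dst_neg A bA, srcA]
    · have : R (ε, o) = [(φ ε, o)] := by simp [R, he]
      rw [this]
      have hsrc : K.src (φ ε, o) = H.src (ε, o) := by
        cases o <;> simp [Multigraph.src, hfst ε he, hsnd ε he]
      have hdst : K.dst (φ ε, o) = H.dst (ε, o) := by
        cases o <;> simp [Multigraph.dst, hfst ε he, hsnd ε he]
      have := Multigraph.isWalk_single K (φ ε, o)
      rwa [hsrc, hdst] at this
  · -- hmem
    rintro ⟨ε, o⟩ z
    by_cases he : ε.1.1 = e1
    · cases o <;> simp [R, ed, he] <;> tauto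
    · cases o <;> simp [R, ed, he]
  · -- hRnodup
    rintro ⟨ε, o⟩
    have hAB : A ≠ B := fun h => h12 (congrArg Subtype.val h)
    by_cases he : ε.1.1 = e1
    · cases o <;> simp [R, he, hAB, hAB.symm, stepA, stepB]
    · cases o <;> simp [R, he]
  · -- hdisj
    intro ε ε' hne z hz hz'
    have hne' : ε.1.1 ≠ ε'.1.1 := fun h => hne (Subtype.ext (Subtype.ext h))
    by_cases he : ε.1.1 = e1 <;> by_cases he' : ε'.1.1 = e1
    · exact hne' (he.trans he'.symm)
    · simp only [ed, if_pos he, if_neg he'] at hz hz'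
      simp only [List.mem_cons, List.mem_singleton, List.not_mem_nil, or_false] at hz hz'
      rcases hz with rfl | rfl
      · exact he' (Subtype.ext_iff.mp hz').symm
      · exact ε'.1.2 (Subtype.ext_iff.mp hz').symm
    · simp only [ed, if_neg he, if_pos he'] at hz hz'
      simp only [List.mem_cons, List.mem_singleton, List.not_mem_nil, or_false] at hz hz'
      rcases hz' with rfl | rfl
      · exact he (Subtype.ext_iff.mp hz).symm
      · exact ε.1.2 (Subtype.ext_iff.mp hz).symm
    · simp only [ed, if_neg he, if_neg he'] at hz hz'
      simp only [List.mem_singleton] at hz hz'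
      rw [hz] at hz'
      have hv := congrArg Subtype.val hz'
      exact hne' hv
end

section
/- Every finite 4k-edge-connected multigraph contains 2k pairwise edge-disjoint spanning trees, and consequently admits a k-arc-connected orientation obtained by rooting all trees at a common vertex and orienting k of the trees away from the root and k towards the root. -/
open NW NW.Multigraph
namespace NWAux
open Classical Relation
noncomputable section

variable {V E : Type}

/-- Adjacency via an edge in `F`. -/
def adjE (G : Multigraph V E) (F : Set E) (x y : V) : Prop :=
  ∃ e ∈ F, (G.fst e = x ∧ G.snd e = y) ∨ (G.fst e = y ∧ G.snd e = x)

/-- Reachability within edge set `F`. -/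
def RR (G : Multigraph V E) (F : Set E) : V → V → Prop :=
  Relation.ReflTransGen (adjE G F)

/-- Every edge of `F` is a bridge of `(V, F)`. -/
def IndepE (G : Multigraph V E) (F : Set E) : Prop :=
  ∀ e ∈ F, ¬ RR G (F \ {e}) (G.fst e) (G.snd e)

def ConnE (G : Multigraph V E) (F : Set E) : Prop := ∀ x y, RR G F x y

variable {G : Multigraph V E}

lemma adjE_symm {F : Set E} : Symmetric (adjE G F) := by
  rintro x y ⟨e, he, h⟩; exact ⟨e, he, h.symm⟩

lemma adjE_mono {F F' : Set E} (h : F ⊆ F') {x y} (ha : adjE G F x y) : adjE G F' x y := by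
  obtain ⟨e, he, h'⟩ := ha; exact ⟨e, h he, h'⟩

lemma RR.symm {F : Set E} {x y} (h : RR G F x y) : RR G F y x :=
  by haveI : Std.Symm (adjE G F) := ⟨fun _ _ h => adjE_symm h⟩; exact (Relation.ReflTransGen.stdSymm (r := adjE G F)).symm _ _ h

lemma RR.rfl {F : Set E} {x : V} : RR G F x x := Relation.ReflTransGen.refl

lemma RR.trans {F : Set E} {x y z} (h : RR G F x y) (h' : RR G F y z) : RR G F x z :=
  Relation.ReflTransGen.trans h h'

lemma RR.mono {F F' : Set E} (h : F ⊆ F') {x y} (hr : RR G F x y) : RR G F' x y :=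
  Relation.ReflTransGen.mono (fun _ _ ha => adjE_mono h ha) _ _ hr

lemma RR.single {F : Set E} {e : E} (he : e ∈ F) : RR G F (G.fst e) (G.snd e) :=
  Relation.ReflTransGen.single ⟨e, he, Or.inl ⟨Eq.refl _, Eq.refl _⟩⟩

lemma RR.of_eq {F : Set E} {x y : V} (h : x = y) : RR G F x y := by subst h; exact RR.rfl

/-- Lifting reachability along edgewise reachability. -/
lemma RR.lift {A B : Set E} (hAB : ∀ e ∈ A, RR G B (G.fst e) (G.snd e))
    {x y} (h : RR G A x y) : RR G B x y := by
  induction h with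
  | refl => exact RR.rfl
  | tail _ hstep ih =>
      obtain ⟨e, he, h'⟩ := hstep
      rcases h' with ⟨h1, h2⟩ | ⟨h1, h2⟩
      · exact ih.trans (h1 ▸ h2 ▸ hAB e he)
      · exact ih.trans (h1 ▸ h2 ▸ (hAB e he).symm)

lemma RR_empty {x y : V} (h : RR G (∅ : Set E) x y) : x = y := by
  induction h with
  | refl => rfl
  | tail _ hstep ih => obtain ⟨e, he, _⟩ := hstep; exact absurd he (Set.notMem_empty e)

/-- Decomposition of reachability after inserting one edge. -/
lemma RR_insert {F : Set E} {e : E} {x y : V} (h : RR G (insert e F) x y) :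
    RR G F x y ∨ (RR G F x (G.fst e) ∧ RR G F (G.snd e) y) ∨
      (RR G F x (G.snd e) ∧ RR G F (G.fst e) y) := by
  induction h with
  | refl => exact Or.inl RR.rfl
  | @tail b c _ hstep ih =>
      obtain ⟨f, hf, hends⟩ := hstep
      rcases Set.mem_insert_iff.mp hf with rfl | hfF
      · rcases hends with ⟨rfl, rfl⟩ | ⟨rfl, rfl⟩
        · rcases ih with ih | ⟨ih1, ih2⟩ | ⟨ih1, ih2⟩
          · exact Or.inr (Or.inl ⟨ih, RR.rfl⟩)
          · exact Or.inr (Or.inl ⟨ih1, RR.rfl⟩)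
          · exact Or.inl ih1
        · rcases ih with ih | ⟨ih1, ih2⟩ | ⟨ih1, ih2⟩
          · exact Or.inr (Or.inr ⟨ih, RR.rfl⟩)
          · exact Or.inl ih1
          · exact Or.inr (Or.inr ⟨ih1, RR.rfl⟩)
      · have hstep' : RR G F b c := Relation.ReflTransGen.single ⟨f, hfF, hends⟩
        rcases ih with ih | ⟨ih1, ih2⟩ | ⟨ih1, ih2⟩
        · exact Or.inl (ih.trans hstep')
        · exact Or.inr (Or.inl ⟨ih1, ih2.trans hstep'⟩)
        · exact Or.inr (Or.inr ⟨ih1, ih2.trans hstep'⟩)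

end
end NWAux
namespace NWAux
open Classical Relation
noncomputable section
variable {V E : Type} {G : Multigraph V E}

lemma IndepE.mono {F F' : Set E} (h : IndepE G F) (hsub : F' ⊆ F) : IndepE G F' := by
  intro e he hr
  exact h e (hsub he) (hr.mono (Set.diff_subset_diff_left hsub))

lemma IndepE.no_loop {F : Set E} (h : IndepE G F) {e : E} (he : e ∈ F) : G.fst e ≠ G.snd e := by
  intro heq; exact h e he (RR.of_eq heq)

lemma IndepE.not_mem_of_not_RR {F : Set E} (h : ¬ RR G F (G.fst e) (G.snd e)) : e ∉ F :=
  fun he => h (RR.single he)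

lemma indepE_insert {F : Set E} {e : E} (hF : IndepE G F)
    (hne : ¬ RR G F (G.fst e) (G.snd e)) : IndepE G (insert e F) := by
  have heF : e ∉ F := IndepE.not_mem_of_not_RR hne
  intro f hf hr
  rcases Set.mem_insert_iff.mp hf with rfl | hfF
  · have : insert f F \ {f} ⊆ F := by
      intro g hg; rcases hg with ⟨hg1, hg2⟩
      rcases Set.mem_insert_iff.mp hg1 with rfl | h; · exact absurd rfl hg2
      · exact h
    exact hne (hr.mono this)
  · have hfe : f ≠ e := fun h => heF (h ▸ hfF)
    have : insert e F \ {f} = insert e (F \ {f}) := by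
      ext g; simp only [Set.mem_diff, Set.mem_insert_iff, Set.mem_singleton_iff]
      constructor
      · rintro ⟨h1 | h1, h2⟩; exacts [Or.inl h1, Or.inr ⟨h1, h2⟩]
      · rintro (rfl | ⟨h1, h2⟩)
        · exact ⟨Or.inl rfl, hfe.symm⟩
        · exact ⟨Or.inr h1, h2⟩
    rw [this] at hr
    have hsingle : RR G F (G.fst f) (G.snd f) := RR.single hfF
    have hmono : ∀ {a b : V}, RR G (F \ {f}) a b → RR G F a b :=
      fun h => h.mono Set.diff_subset
    rcases RR_insert hr with h | ⟨h1, h2⟩ | ⟨h1, h2⟩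
    · exact hF f hfF h
    · exact hne (((hmono h1).symm.trans hsingle).trans (hmono h2).symm)
    · exact hne (((hmono h2).trans hsingle.symm).trans (hmono h1))

/-- The set of `u`-`v` bridges of `F`. -/
def bridges (G : Multigraph V E) (F : Set E) (u v : V) : Set E :=
  {e | e ∈ F ∧ ¬ RR G (F \ {e}) u v}

lemma RR_bridges [Finite E] {F : Set E} (hF : IndepE G F) {u v : V} (h : RR G F u v) :
    RR G (bridges G F u v) u v := by
  generalize hn : F.ncard = n
  induction n using Nat.strong_induction_on generalizing F with
  | _ n ih =>
  by_cases hall : ∀ e ∈ F, ¬ RR G (F \ {e}) u v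
  · have : bridges G F u v = F := by
      ext g; exact ⟨fun hg => hg.1, fun hg => ⟨hg, hall g hg⟩⟩
    rw [this]; exact h
  · push_neg at hall
    obtain ⟨e, heF, hre⟩ := hall
    have hlt : (F \ {e}).ncard < n := by
      subst hn
      exact Set.ncard_lt_ncard (Set.sdiff_singleton_ssubset.mpr heF) (Set.toFinite F)
    have hsub : RR G (bridges G (F \ {e}) u v) u v :=
      ih _ hlt (hF.mono Set.diff_subset) hre rfl
    refine hsub.mono ?_
    rintro f ⟨hf1, hf2⟩
    have hfe : f ≠ e := fun h => (h ▸ hf1).2 rfl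
    refine ⟨hf1.1, fun hcon => ?_⟩
    have heq : F \ {f} = insert e ((F \ {e}) \ {f}) := by
      ext g
      simp only [Set.mem_diff, Set.mem_insert_iff, Set.mem_singleton_iff]
      constructor
      · rintro ⟨h1, h2⟩
        by_cases hge : g = e; · exact Or.inl hge
        · exact Or.inr ⟨⟨h1, hge⟩, h2⟩
      · rintro (rfl | ⟨⟨h1, _⟩, h2⟩)
        · exact ⟨heF, hfe.symm⟩
        · exact ⟨h1, h2⟩
    rw [heq] at hcon
    have hmono : ∀ {a b : V}, RR G ((F \ {e}) \ {f}) a b → RR G (F \ {e}) a b :=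
      fun h => h.mono Set.diff_subset
    rcases RR_insert hcon with hc | ⟨h1, h2⟩ | ⟨h1, h2⟩
    · exact hf2 hc
    · exact hF e heF (((hmono h1).symm.trans hre).trans (hmono h2).symm)
    · exact hF e heF (((hmono h2).trans hre.symm).trans (hmono h1))

end
end NWAux
namespace NWAux
open Classical Relation
noncomputable section
variable {V E : Type} {G : Multigraph V E}

def setoidRR (G : Multigraph V E) (F : Set E) : Setoid V :=
  ⟨RR G F, ⟨fun _ => RR.rfl, fun h => h.symm, fun h h' => h.trans h'⟩⟩

def compQ (G : Multigraph V E) (F : Set E) : Type := Quotient (setoidRR G F)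

instance [Finite V] {F : Set E} : Finite (compQ G F) :=
  Finite.of_surjective (Quotient.mk (setoidRR G F)) Quot.mk_surjective

def ncompE (G : Multigraph V E) (F : Set E) : ℕ := Nat.card (compQ G F)

lemma compQ_mk_eq {F : Set E} {v w : V} :
    (Quotient.mk (setoidRR G F) v = Quotient.mk (setoidRR G F) w) ↔ RR G F v w :=
  ⟨fun h => Quotient.exact h, fun h => Quotient.sound h⟩

lemma ncompE_empty [Finite V] : ncompE G (∅ : Set E) = Nat.card V := by
  refine (Nat.card_eq_of_bijective (Quotient.mk (setoidRR G (∅ : Set E))) ?_).symm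
  constructor
  · intro a b h; exact RR_empty (compQ_mk_eq.mp h)
  · exact Quot.mk_surjective

lemma ncompE_diff_singleton [Finite V] {F : Set E} {e : E} (he : e ∈ F)
    (hb : ¬ RR G (F \ {e}) (G.fst e) (G.snd e)) :
    ncompE G (F \ {e}) = ncompE G F + 1 := by
  set F' := F \ {e} with hF'
  set a : compQ G F' := Quotient.mk _ (G.snd e) with ha
  have hmono : ∀ {x y : V}, RR G F' x y → RR G F x y := fun h => h.mono Set.diff_subset
  have hFins : insert e F' = F := by
    rw [hF', Set.insert_diff_singleton, Set.insert_eq_self.mpr he]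
  set toF : compQ G F' → compQ G F :=
    Quotient.map id (fun x y h => hmono h) with htoF
  have htoF_mk : ∀ v : V, toF (Quotient.mk _ v) = Quotient.mk _ v := fun v => rfl
  have hbij : Function.Bijective (fun q : {q : compQ G F' // q ≠ a} => toF q.1) := by
    constructor
    · rintro ⟨q1, hq1⟩ ⟨q2, hq2⟩ h
      obtain ⟨v, rfl⟩ := Quotient.exists_rep q1
      obtain ⟨w, rfl⟩ := Quotient.exists_rep q2
      simp only [htoF_mk] at h
      have hvw : RR G F v w := compQ_mk_eq.mp h
      rw [← hFins] at hvw
      rcases RR_insert hvw with hc | ⟨h1, h2⟩ | ⟨h1, h2⟩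
      · exact Subtype.ext (compQ_mk_eq.mpr hc)
      · exact absurd (compQ_mk_eq.mpr h2.symm) hq2
      · exact absurd (compQ_mk_eq.mpr h1) hq1
    · intro q
      obtain ⟨v, rfl⟩ := Quotient.exists_rep q
      by_cases h : RR G F' v (G.snd e)
      · refine ⟨⟨Quotient.mk _ (G.fst e), fun hcon => hb (compQ_mk_eq.mp hcon)⟩, ?_⟩
        simp only [htoF_mk]
        exact compQ_mk_eq.mpr ((RR.single he).trans (hmono h).symm)
      · exact ⟨⟨Quotient.mk _ v, fun hcon => h (compQ_mk_eq.mp hcon)⟩, rfl⟩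
  have h1 : Nat.card {q : compQ G F' // q ≠ a} = ncompE G F :=
    Nat.card_eq_of_bijective _ hbij
  have h2 : Nat.card (compQ G F') = Nat.card {q : compQ G F' // q ≠ a} + 1 := by
    rw [← Nat.card_congr (Equiv.optionSubtypeNe a), Finite.card_option]
  rw [ncompE, h2, h1]

lemma rank_eq [Finite V] [Finite E] {F : Set E} (hF : IndepE G F) :
    F.ncard + ncompE G F = Nat.card V := by
  generalize hn : F.ncard = n
  induction n using Nat.strong_induction_on generalizing F with
  | _ n ih =>
  rcases Set.eq_empty_or_nonempty F with rfl | ⟨e, he⟩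
  · rw [← hn, Set.ncard_empty, ncompE_empty]; omega
  · have hb := hF e he
    have hcard : (F \ {e}).ncard + 1 = F.ncard := Set.ncard_diff_singleton_add_one he
    have hlt : (F \ {e}).ncard < n := by omega
    have := ih _ hlt (hF.mono Set.diff_subset) rfl
    rw [ncompE_diff_singleton he hb] at this
    omega

lemma ncompE_eq_one [Finite V] [Nonempty V] {F : Set E} (hc : ConnE G F) :
    ncompE G F = 1 := by
  rw [ncompE, Nat.card_eq_one_iff_unique]
  constructor
  · constructor
    intro q1 q2
    obtain ⟨v, rfl⟩ := Quotient.exists_rep q1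
    obtain ⟨w, rfl⟩ := Quotient.exists_rep q2
    exact compQ_mk_eq.mpr (hc v w)
  · exact ⟨Quotient.mk _ (Classical.arbitrary V)⟩

lemma ncompE_two_le [Finite V] {F : Set E} {x y : V} (h : ¬ RR G F x y) :
    2 ≤ ncompE G F := by
  have : (Quotient.mk (setoidRR G F) x) ≠ (Quotient.mk (setoidRR G F) y) :=
    fun hc => h (compQ_mk_eq.mp hc)
  have : Nontrivial (compQ G F) := ⟨_, _, this⟩
  rw [ncompE]
  exact Finite.one_lt_card

lemma indep_card_conn [Finite V] [Finite E] [Nonempty V] {F : Set E}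
    (hF : IndepE G F) (hc : ConnE G F) : F.ncard + 1 = Nat.card V := by
  have := rank_eq hF
  rw [ncompE_eq_one hc] at this; omega

lemma indep_card_le [Finite V] [Finite E] [Nonempty V] {F : Set E} (hF : IndepE G F) :
    F.ncard + 1 ≤ Nat.card V := by
  have h1 := rank_eq hF
  have h2 : 1 ≤ ncompE G F := by
    rw [ncompE]
    exact Nat.one_le_iff_ne_zero.mpr (Nat.card_ne_zero.mpr ⟨⟨Quotient.mk _ (Classical.arbitrary V)⟩, inferInstance⟩)
  omega

lemma indep_card_le_of_not_conn [Finite V] [Finite E] {F : Set E}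
    (hF : IndepE G F) (hc : ¬ ConnE G F) : F.ncard + 2 ≤ Nat.card V := by
  have h1 := rank_eq hF
  simp only [ConnE, not_forall] at hc
  obtain ⟨x, y, hxy⟩ := hc
  have := ncompE_two_le hxy
  omega

/-- Spanning forest extraction. -/
lemma exists_forest [Finite E] (F : Set E) :
    ∃ F₀ ⊆ F, IndepE G F₀ ∧ ∀ x y, RR G F x y ↔ RR G F₀ x y := by
  generalize hn : F.ncard = n
  induction n using Nat.strong_induction_on generalizing F with
  | _ n ih =>
  by_cases hF : IndepE G F
  · exact ⟨F, subset_rfl, hF, fun x y => Iff.rfl⟩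
  · rw [IndepE] at hF
    push_neg at hF
    obtain ⟨e, he, hre⟩ := hF
    have hlt : (F \ {e}).ncard < n := hn ▸ Set.ncard_lt_ncard
      (Set.sdiff_singleton_ssubset.mpr he) (Set.toFinite F)
    obtain ⟨F₀, hsub, hind, hiff⟩ := ih _ hlt (F \ {e}) rfl
    refine ⟨F₀, hsub.trans Set.diff_subset, hind, fun x y => ?_⟩
    rw [← hiff]
    constructor
    · intro h
      refine RR.lift (fun g hg => ?_) h
      by_cases hge : g = e
      · subst hge; exact hre
      · exact RR.single ⟨hg, hge⟩
    · exact fun h => h.mono Set.diff_subset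
  
lemma indep_of_conn_card [Finite V] [Finite E] [Nonempty V] {F : Set E}
    (hc : ConnE G F) (hcard : F.ncard + 1 ≤ Nat.card V) : IndepE G F := by
  obtain ⟨F₀, hsub, hind, hiff⟩ := exists_forest (G := G) F
  have hc0 : ConnE G F₀ := fun x y => (hiff x y).mp (hc x y)
  have h0 := indep_card_conn hind hc0
  have heq : F₀ = F := Set.eq_of_subset_of_ncard_le hsub (by omega) (Set.toFinite F)
  rw [← heq]; exact hind

end
end NWAux
namespace NWAux
open Classical Relation
noncomputable section
variable {V E : Type} {G : Multigraph V E} {m : ℕ}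

def validT (G : Multigraph V E) (m : ℕ) (F : Fin m → Set E) : Prop :=
  (∀ i, IndepE G (F i)) ∧ ∀ i j, i ≠ j → Disjoint (F i) (F j)

def totT (F : Fin m → Set E) : ℕ := ∑ i, (F i).ncard

def moveT (G : Multigraph V E) (m : ℕ) (F F' : Fin m → Set E) : Prop :=
  validT G m F ∧ ∃ (i : Fin m) (e e' : E), (∀ j, e ∉ F j) ∧ e' ∈ F i ∧
    IndepE G (insert e (F i \ {e'})) ∧ F' = Function.update F i (insert e (F i \ {e'}))

lemma moveT_valid {F F' : Fin m → Set E} (h : moveT G m F F') : validT G m F' := by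
  obtain ⟨⟨hind, hdis⟩, i, e, e', hefree, he', hnew, rfl⟩ := h
  constructor
  · intro j
    rcases eq_or_ne j i with rfl | hji
    · rw [Function.update_self]; exact hnew
    · rw [Function.update_of_ne hji]; exact hind j
  · intro j j' hjj'
    rcases eq_or_ne i j with rfl | hji
    · rw [Function.update_self, Function.update_of_ne (fun hc : j' = i => hjj' hc.symm)]
      rw [Set.disjoint_left]
      rintro g hg
      rcases Set.mem_insert_iff.mp hg with rfl | ⟨hg1, _⟩
      · exact hefree j'
      · exact Set.disjoint_left.mp (hdis i j' hjj') hg1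
    rcases eq_or_ne i j' with rfl | hj'i
    · rw [Function.update_self, Function.update_of_ne (fun hc : j = i => hji hc.symm)]
      rw [Set.disjoint_right]
      rintro g hg
      rcases Set.mem_insert_iff.mp hg with rfl | ⟨hg1, _⟩
      · exact hefree j
      · exact Set.disjoint_right.mp (hdis j i hjj') hg1
    · rw [Function.update_of_ne (fun hc : j = i => hji hc.symm),
          Function.update_of_ne (fun hc : j' = i => hj'i hc.symm)]
      exact hdis j j' hjj'

lemma moveT_tot [Finite E] {F F' : Fin m → Set E} (h : moveT G m F F') : totT F' = totT F := by
  obtain ⟨hv, i, e, e', hefree, he', hnew, rfl⟩ := h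
  have hcard : (insert e (F i \ {e'})).ncard = (F i).ncard := by
    rw [Set.ncard_insert_of_notMem (fun hc => hefree i hc.1) (Set.toFinite _)]
    exact Set.ncard_diff_singleton_add_one he' (Set.toFinite _)
  unfold totT
  rcases eq_or_ne m 0 with rfl | hm
  · simp
  rw [Finset.sum_eq_sum_sdiff_singleton_add (Finset.mem_univ i),
      Finset.sum_eq_sum_sdiff_singleton_add (Finset.mem_univ i) (fun j => (F j).ncard)]
  congr 1
  · apply Finset.sum_congr rfl
    intro j hj
    have hji : j ≠ i := by
      intro hc; exact (Finset.mem_sdiff.mp hj).2 (Finset.mem_singleton.mpr hc)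
    rw [Function.update_of_ne hji]
  · rw [Function.update_self]; exact hcard

lemma moveT_symm {F F' : Fin m → Set E} (h : moveT G m F F') : moveT G m F' F := by
  have hv' := moveT_valid h
  obtain ⟨hv, i, e, e', hefree, he', hnew, rfl⟩ := h
  have hee' : e ≠ e' := fun hc => hefree i (hc ▸ he')
  have hdiff : insert e (F i \ {e'}) \ {e} = F i \ {e'} := by
    rw [Set.insert_diff_self_of_notMem]
    rintro ⟨hc, _⟩; exact hefree i hc
  refine ⟨hv', i, e', e, ?_, ?_, ?_, ?_⟩
  · intro j
    rcases eq_or_ne j i with rfl | hji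
    · rw [Function.update_self]
      rintro (hc | ⟨_, hc⟩)
      · exact hee' hc.symm
      · exact hc rfl
    · rw [Function.update_of_ne hji]
      exact fun hc => Set.disjoint_left.mp (hv.2 i j (fun h => hji h.symm)) he' hc
  · rw [Function.update_self]; exact Set.mem_insert e _
  · rw [Function.update_self, hdiff, Set.insert_diff_singleton,
        Set.insert_eq_self.mpr he']
    exact hv.1 i
  · rw [Function.update_self, hdiff, Set.insert_diff_singleton,
        Set.insert_eq_self.mpr he', Function.update_idem, Function.update_eq_self]

def reachT (G : Multigraph V E) (m : ℕ) (F0 F : Fin m → Set E) : Prop :=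
  Relation.ReflTransGen (moveT G m) F0 F

def DD (G : Multigraph V E) (m : ℕ) (F0 : Fin m → Set E) : Set E :=
  {e | ∃ F, reachT G m F0 F ∧ ∀ i, e ∉ F i}

def maxT (G : Multigraph V E) (m : ℕ) (F0 : Fin m → Set E) : Prop :=
  validT G m F0 ∧ ∀ F, validT G m F → totT F ≤ totT F0

lemma reach_valid {F0 F : Fin m → Set E} (h0 : validT G m F0) (h : reachT G m F0 F) :
    validT G m F := by
  induction h with
  | refl => exact h0
  | tail _ hbc ih => exact moveT_valid hbc

lemma reach_tot [Finite E] {F0 F : Fin m → Set E} (h : reachT G m F0 F) : totT F = totT F0 := by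
  induction h with
  | refl => rfl
  | tail _ hbc ih => rw [moveT_tot hbc, ih]

lemma reach_symm {F0 F : Fin m → Set E} (h : reachT G m F0 F) : reachT G m F F0 :=
  by haveI : Std.Symm (moveT G m) := ⟨fun _ _ h => moveT_symm h⟩; exact (Relation.ReflTransGen.stdSymm (r := moveT G m)).symm _ _ h

lemma sub_lemma [Finite V] [Finite E] {F0 : Fin m → Set E} (hmax : maxT G m F0)
    {F : Fin m → Set E} (hF : reachT G m F0 F) {e : E} (he : ∀ i, e ∉ F i) (i : Fin m) :
    RR G (F i ∩ DD G m F0) (G.fst e) (G.snd e) := by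
  by_cases hloop : G.fst e = G.snd e
  · exact RR.of_eq hloop
  have hv : validT G m F := reach_valid hmax.1 hF
  have hconn : RR G (F i) (G.fst e) (G.snd e) := by
    by_contra hne
    have hind : IndepE G (insert e (F i)) := indepE_insert (hv.1 i) hne
    have hv' : validT G m (Function.update F i (insert e (F i))) := by
      constructor
      · intro j
        rcases eq_or_ne j i with rfl | hji
        · rw [Function.update_self]; exact hind
        · rw [Function.update_of_ne hji]; exact hv.1 j
      · intro j j' hjj'
        rcases eq_or_ne i j with rfl | hji
        · rw [Function.update_self, Function.update_of_ne (fun hc : j' = i => hjj' hc.symm),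
              Set.disjoint_left]
          rintro g hg
          rcases Set.mem_insert_iff.mp hg with rfl | hg1
          · exact he j'
          · exact Set.disjoint_left.mp (hv.2 i j' hjj') hg1
        rcases eq_or_ne i j' with rfl | hj'i
        · rw [Function.update_self, Function.update_of_ne (fun hc : j = i => hji hc.symm),
              Set.disjoint_right]
          rintro g hg
          rcases Set.mem_insert_iff.mp hg with rfl | hg1
          · exact he j
          · exact Set.disjoint_right.mp (hv.2 j i hjj') hg1
        · rw [Function.update_of_ne (fun hc : j = i => hji hc.symm),
              Function.update_of_ne (fun hc : j' = i => hj'i hc.symm)]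
          exact hv.2 j j' hjj'
    have htot : totT (Function.update F i (insert e (F i))) = totT F + 1 := by
      unfold totT
      rw [Finset.sum_eq_sum_sdiff_singleton_add (Finset.mem_univ i),
          Finset.sum_eq_sum_sdiff_singleton_add (Finset.mem_univ i) (fun j => (F j).ncard)]
      have : (insert e (F i)).ncard = (F i).ncard + 1 :=
        Set.ncard_insert_of_notMem (he i) (Set.toFinite _)
      rw [Function.update_self, this]
      have hsum : ∀ j ∈ Finset.univ \ {i},
          ((Function.update F i (insert e (F i))) j).ncard = (F j).ncard := by
        intro j hj
        have hji : j ≠ i := by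
          intro hc; exact (Finset.mem_sdiff.mp hj).2 (Finset.mem_singleton.mpr hc)
        rw [Function.update_of_ne hji]
      rw [Finset.sum_congr rfl hsum]
      omega
    have h1 := hmax.2 _ hv'
    have h2 := reach_tot hF
    omega
  have hkey := RR_bridges (hv.1 i) hconn
  refine hkey.mono ?_
  rintro e' ⟨he'F, he'b⟩
  refine ⟨he'F, ?_⟩
  have hmove : moveT G m F (Function.update F i (insert e (F i \ {e'}))) := by
    refine ⟨hv, i, e, e', he, he'F, ?_, rfl⟩
    exact indepE_insert ((hv.1 i).mono Set.diff_subset) he'b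
  refine ⟨_, hF.tail hmove, fun j => ?_⟩
  rcases eq_or_ne j i with rfl | hji
  · rw [Function.update_self]
    rintro (hc | ⟨_, hc⟩)
    · exact he j (hc ▸ he'F)
    · exact hc rfl
  · rw [Function.update_of_ne hji]
    exact fun hc => Set.disjoint_left.mp (hv.2 i j (fun h => hji h.symm)) he'F hc

lemma main_lemma [Finite V] [Finite E] {F0 : Fin m → Set E} (hmax : maxT G m F0)
    {Fs : Fin m → Set E} (hFs : reachT G m F0 Fs) {e : E} (he : ∀ i, e ∉ Fs i) :
    ∀ {F}, Relation.ReflTransGen (moveT G m) Fs F →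
      ∀ i, RR G (F i ∩ DD G m F0) (G.fst e) (G.snd e) := by
  intro F hpath
  induction hpath with
  | refl => exact sub_lemma hmax hFs he
  | @tail b c hab hbc ih =>
    intro i
    have hb : reachT G m F0 b := hFs.trans hab
    have hc : reachT G m F0 c := hb.tail hbc
    have hvb : validT G m b := reach_valid hmax.1 hb
    obtain ⟨_, j, f, f', hffree, hf'mem, hindep, rfl⟩ := hbc
    rcases eq_or_ne i j with rfl | hij
    · refine RR.lift (fun g hg => ?_) (ih i)
      obtain ⟨hgb, hgD⟩ := hg
      by_cases hgf' : g = f'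
      · subst hgf'
        have hfree : ∀ l, g ∉ (Function.update b i (insert f (b i \ {g}))) l := by
          intro l
          rcases eq_or_ne l i with rfl | hli
          · rw [Function.update_self]
            rintro (hcon | ⟨_, hcon⟩)
            · exact hffree l (hcon ▸ hgb)
            · exact hcon rfl
          · rw [Function.update_of_ne hli]
            exact fun hcon => Set.disjoint_left.mp (hvb.2 i l (fun h => hli h.symm)) hgb hcon
        exact sub_lemma hmax hc hfree i
      · refine RR.single ?_
        refine ⟨?_, hgD⟩
        rw [Function.update_self]
        exact Set.mem_insert_of_mem _ ⟨hgb, hgf'⟩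
    · have : Function.update b j (insert f (b j \ {f'})) i = b i := Function.update_of_ne hij _ _
      rw [this]
      exact ih i

lemma dd_conn [Finite V] [Finite E] {F0 : Fin m → Set E} (hmax : maxT G m F0)
    {F : Fin m → Set E} (hF : reachT G m F0 F) {g : E} (hg : g ∈ DD G m F0) (i : Fin m) :
    RR G (F i ∩ DD G m F0) (G.fst g) (G.snd g) := by
  obtain ⟨Fs, hFs, hfree⟩ := hg
  exact main_lemma hmax hFs hfree ((reach_symm hFs).trans hF) i

end
end NWAux
namespace NWAux
open Classical Relation
noncomputable section
variable {V E : Type} {G : Multigraph V E}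

lemma count_nonloop [Finite V] [Finite E] {m : ℕ}
    (h : ∀ v : V, 2*m ≤ (G.cut {v}).ncard) :
    m * Nat.card V ≤ {e : E | G.fst e ≠ G.snd e}.ncard := by
  classical
  have : Fintype V := Fintype.ofFinite V
  have : Fintype E := Fintype.ofFinite E
  have hcut : ∀ v : V, (G.cut {v}).ncard
      = (Finset.univ.filter (fun e => e ∈ G.cut {v})).card := by
    intro v
    rw [← Set.ncard_coe_finset]
    congr 1
    ext e; simp
  have hNL : {e : E | G.fst e ≠ G.snd e}.ncard
      = (Finset.univ.filter (fun e : E => G.fst e ≠ G.snd e)).card := by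
    rw [← Set.ncard_coe_finset]; congr 1; ext e; simp
  have hsum1 : 2 * m * Nat.card V ≤ ∑ v : V, (G.cut {v}).ncard := by
    calc 2 * m * Nat.card V = ∑ _v : V, 2 * m := by
          rw [Finset.sum_const, Nat.card_eq_fintype_card]
          ring_nf
          simp [Finset.card_univ, Nat.mul_comm]
      _ ≤ ∑ v : V, (G.cut {v}).ncard := Finset.sum_le_sum (fun v _ => h v)
  have hswap : ∑ v : V, (G.cut {v}).ncard
      = ∑ e : E, (Finset.univ.filter (fun v : V => e ∈ G.cut {v})).card := by
    simp only [hcut, Finset.card_filter]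
    rw [Finset.sum_comm]
  have hfiber : ∀ e : E, (Finset.univ.filter (fun v : V => e ∈ G.cut {v})).card
      = if G.fst e ≠ G.snd e then 2 else 0 := by
    intro e
    by_cases hl : G.fst e = G.snd e
    · simp only [hl, if_neg (not_not_intro rfl)]
      rw [Finset.card_eq_zero, Finset.filter_eq_empty_iff]
      intro v _
      intro hc
      rcases hc with ⟨h1, h2⟩ | ⟨h1, h2⟩
      · exact h2 (by rw [← hl]; exact h1)
      · exact h1 (by rw [hl]; exact h2)
    · rw [if_pos hl]
      have : (Finset.univ.filter (fun v : V => e ∈ G.cut {v})) = {G.fst e, G.snd e} := by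
        ext v
        simp only [Finset.mem_filter, Finset.mem_univ, true_and, Finset.mem_insert,
          Finset.mem_singleton]
        constructor
        · rintro (⟨h1, _⟩ | ⟨_, h2⟩)
          · exact Or.inl h1.symm
          · exact Or.inr h2.symm
        · rintro (rfl | rfl)
          · exact Or.inl ⟨rfl, fun hc => hl hc.symm⟩
          · exact Or.inr ⟨hl, rfl⟩
      rw [this, Finset.card_insert_of_notMem (by simpa using hl), Finset.card_singleton]
  have hcount : ∑ e : E, (Finset.univ.filter (fun v : V => e ∈ G.cut {v})).card
      = 2 * {e : E | G.fst e ≠ G.snd e}.ncard := by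
    rw [hNL]
    rw [Finset.card_filter, Finset.mul_sum]
    apply Finset.sum_congr rfl
    intro e _
    rw [hfiber e]
    by_cases hl : G.fst e ≠ G.snd e <;> simp [hl]
  have hfin := hsum1.trans (le_of_eq (hswap.trans hcount))
  have h2 : 2 * (m * Nat.card V) ≤ 2 * {e : E | G.fst e ≠ G.snd e}.ncard := by
    calc 2 * (m * Nat.card V) = 2*m*Nat.card V := by ring
      _ ≤ _ := hfin
  exact Nat.le_of_mul_le_mul_left h2 (by norm_num)

lemma ncard_iUnion_le {m : ℕ} [Finite E] (F : Fin m → Set E) :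
    (⋃ i, F i).ncard ≤ ∑ i, (F i).ncard := by
  classical
  have : Fintype E := Fintype.ofFinite E
  have h1 : (⋃ i, F i) = ↑(Finset.univ.biUnion (fun i => (F i).toFinset)) := by
    ext e; simp
  rw [h1, Set.ncard_coe_finset]
  refine (Finset.card_biUnion_le).trans ?_
  apply Finset.sum_le_sum
  intro i _
  rw [Set.ncard_eq_toFinset_card']

end
end NWAux
namespace NWAux
open Classical Relation
noncomputable section

theorem core_packing : ∀ (n : ℕ) (V E : Type), ∀ (_ : Finite V) (_ : Finite E),
    ∀ (G : Multigraph V E) (m : ℕ), Nat.card V ≤ n →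
    (∀ X : Set V, X.Nonempty → Xᶜ.Nonempty → 2*m ≤ (G.cut X).ncard) →
    ∃ F : Fin m → Set E, (∀ i, IndepE G (F i) ∧ ConnE G (F i)) ∧
      ∀ i j, i ≠ j → Disjoint (F i) (F j) := by
  intro n
  induction n with
  | zero =>
    intro V E hV hE G m hcard hconn
    have hsub : ∀ x y : V, x = y := by
      intro x y
      have : Nat.card V = 0 := by omega
      rcases Nat.card_eq_zero.mp this with h | h
      · exact h.elim x
      · exact absurd h (not_infinite_iff_finite.mpr hV)
    exact ⟨fun _ => ∅, fun i => ⟨fun e he => absurd he (Set.notMem_empty e),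
      fun x y => RR.of_eq (hsub x y)⟩, fun i j _ => by simp⟩
  | succ n ih =>
    intro V E hV hE G m hcard hconn
    by_cases hsmall : Nat.card V ≤ 1
    · have hsub : ∀ x y : V, x = y := by
        intro x y
        by_contra hxy
        have : Nontrivial V := ⟨x, y, hxy⟩
        have := Finite.one_lt_card (α := V)
        omega
      exact ⟨fun _ => ∅, fun i => ⟨fun e he => absurd he (Set.notMem_empty e),
        fun x y => RR.of_eq (hsub x y)⟩, fun i j _ => by simp⟩
    push_neg at hsmall
    have hNT : Nontrivial V := Finite.one_lt_card_iff_nontrivial.mp hsmall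
    have hNE : Nonempty V := ⟨Classical.arbitrary V⟩
    -- maximal tuple
    have hfinT : {F : Fin m → Set E | validT G m F}.Finite := Set.toFinite _
    have hneT : {F : Fin m → Set E | validT G m F}.Nonempty :=
      ⟨fun _ => ∅, ⟨fun i e he => absurd he (Set.notMem_empty e), fun i j _ => by simp⟩⟩
    obtain ⟨F0, hF0v, hF0max⟩ := hfinT.exists_maximalFor totT _ hneT
    have hmax : maxT G m F0 := by
      refine ⟨hF0v, fun F hF => ?_⟩
      by_contra hlt
      push_neg at hlt
      have := hF0max hF (le_of_lt hlt)
      omega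
    by_cases hall : ∀ i, ConnE G (F0 i)
    · exact ⟨F0, fun i => ⟨hF0v.1 i, hall i⟩, hF0v.2⟩
    obtain ⟨j, hj⟩ := not_forall.mp hall
    -- counting
    have hsingle : ∀ v : V, 2*m ≤ (G.cut {v}).ncard := by
      intro v
      obtain ⟨w, hw⟩ := exists_ne v
      exact hconn {v} ⟨v, rfl⟩ ⟨w, hw⟩
    have hcount := count_nonloop hsingle
    have hjcard : (F0 j).ncard + 2 ≤ Nat.card V :=
      indep_card_le_of_not_conn (hF0v.1 j) hj
    have hicard : ∀ i, (F0 i).ncard + 1 ≤ Nat.card V := fun i => indep_card_le (hF0v.1 i)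
    have htotlt : totT F0 + m < m * Nat.card V := by
      have hlt : ∑ i : Fin m, ((F0 i).ncard + 1) < ∑ _i : Fin m, Nat.card V :=
        Finset.sum_lt_sum (fun i _ => hicard i) ⟨j, Finset.mem_univ j, by omega⟩
      rw [Finset.sum_add_distrib, Finset.sum_const, Finset.sum_const, Finset.card_univ,
        Fintype.card_fin, smul_eq_mul, smul_eq_mul, mul_one] at hlt
      exact hlt
    have hUle : (⋃ i, F0 i).ncard ≤ totT F0 := ncard_iUnion_le F0
    have hUsub : (⋃ i, F0 i) ⊆ {e : E | G.fst e ≠ G.snd e} := by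
      rintro e he
      obtain ⟨i, hi⟩ := Set.mem_iUnion.mp he
      exact (hF0v.1 i).no_loop hi
    obtain ⟨e0, he0NL, he0free'⟩ :=
      Set.exists_mem_notMem_of_ncard_lt_ncard
        (show (⋃ i, F0 i).ncard < {e : E | G.fst e ≠ G.snd e}.ncard by omega)
        (Set.toFinite _)
    have he0free : ∀ i, e0 ∉ F0 i := fun i hi => he0free' (Set.mem_iUnion.mpr ⟨i, hi⟩)
    have he0D : e0 ∈ DD G m F0 := ⟨F0, Relation.ReflTransGen.refl, he0free⟩
    set U : Set V := {v | RR G (DD G m F0) (G.fst e0) v} with hUdef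
    have hx1U : G.fst e0 ∈ U := RR.rfl
    have hx2U : G.snd e0 ∈ U := RR.single he0D
    have hUclosed : ∀ {a b : V}, a ∈ U → RR G (DD G m F0) a b → b ∈ U :=
      fun ha h => RR.trans ha h
    have hrestrict : ∀ (A : Set E), A ⊆ DD G m F0 → ∀ a b, a ∈ U → RR G A a b →
        RR G {g | g ∈ A ∧ G.fst g ∈ U ∧ G.snd g ∈ U} a b := by
      intro A hAD a b ha h
      revert ha
      induction h using Relation.ReflTransGen.head_induction_on with
      | refl => intro _; exact RR.rfl
      | @head a' c' hstep htail ihh =>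
        intro ha
        obtain ⟨g, hgA, hends⟩ := hstep
        have hgD : g ∈ DD G m F0 := hAD hgA
        have hc'U : c' ∈ U :=
          hUclosed ha (Relation.ReflTransGen.single
            (show adjE G (DD G m F0) a' c' from ⟨g, hgD, hends⟩))
        have hgU : G.fst g ∈ U ∧ G.snd g ∈ U := by
          rcases hends with ⟨h1, h2⟩ | ⟨h1, h2⟩
          · exact ⟨h1 ▸ ha, h2 ▸ hc'U⟩
          · exact ⟨h1 ▸ hc'U, h2 ▸ ha⟩
        have hstep' : RR G {g | g ∈ A ∧ G.fst g ∈ U ∧ G.snd g ∈ U} a' c' :=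
          Relation.ReflTransGen.single
            (show adjE G {g | g ∈ A ∧ G.fst g ∈ U ∧ G.snd g ∈ U} a' c' from ⟨g, ⟨hgA, hgU⟩, hends⟩)
        exact RR.trans hstep' (ihh hc'U)
    have hWconn : ∀ (i : Fin m), ∀ u ∈ U, ∀ v ∈ U,
        RR G {g | g ∈ F0 i ∧ G.fst g ∈ U ∧ G.snd g ∈ U} u v := by
      intro i u hu v hv
      have h1 : RR G (DD G m F0) u v := RR.trans (RR.symm hu) hv
      have h2 : RR G (F0 i ∩ DD G m F0) u v :=
        RR.lift (fun g hg => dd_conn hmax Relation.ReflTransGen.refl hg i) h1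
      have h3 := hrestrict (F0 i ∩ DD G m F0) Set.inter_subset_right u v hu h2
      have hsub' : {g | g ∈ F0 i ∩ DD G m F0 ∧ G.fst g ∈ U ∧ G.snd g ∈ U}
          ⊆ {g | g ∈ F0 i ∧ G.fst g ∈ U ∧ G.snd g ∈ U} := fun g hg => ⟨hg.1.1, hg.2⟩
      exact h3.mono hsub'
    by_cases hUuniv : ∀ v, v ∈ U
    · refine ⟨F0, fun i => ⟨hF0v.1 i, fun x y => ?_⟩, hF0v.2⟩
      exact ((hWconn i x (hUuniv x) y (hUuniv y)).mono (fun g hg => hg.1))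
    -- contraction
    · let V' := Option {v : V // v ∉ U}
      let π : V → V' := fun v => if h : v ∈ U then none else some ⟨v, h⟩
      have hπeq : ∀ a b : V, π a = π b ↔ (a = b ∨ (a ∈ U ∧ b ∈ U)) := by
        intro a b
        constructor
        · intro h
          by_cases h1 : a ∈ U
          · by_cases h2 : b ∈ U
            · exact Or.inr ⟨h1, h2⟩
            · rw [show π a = none from dif_pos h1, show π b = some ⟨b, h2⟩ from dif_neg h2] at h
              exact absurd h (by simp)
          · by_cases h2 : b ∈ U
            · rw [show π a = some ⟨a, h1⟩ from dif_neg h1, show π b = none from dif_pos h2] at h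
              exact absurd h (by simp)
            · rw [show π a = some ⟨a, h1⟩ from dif_neg h1,
                  show π b = some ⟨b, h2⟩ from dif_neg h2] at h
              exact Or.inl (congrArg Subtype.val (Option.some_injective _ h))
        · rintro (rfl | ⟨h1, h2⟩)
          · rfl
          · rw [show π a = none from dif_pos h1, show π b = none from dif_pos h2]
      have hπsurj : Function.Surjective π := by
        rintro (_ | ⟨v, hv⟩)
        · exact ⟨G.fst e0, dif_pos hx1U⟩
        · exact ⟨v, dif_neg hv⟩
      let E' := {e : E // ¬ (G.fst e ∈ U ∧ G.snd e ∈ U)}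
      let G' : Multigraph V' E' := ⟨fun e => π (G.fst e.1), fun e => π (G.snd e.1)⟩
      have instFin : Fintype {v : V // v ∉ U} := Fintype.ofFinite _
      have instV' : Finite V' := inferInstanceAs (Finite (Option {v : V // v ∉ U}))
      have instE' : Finite E' := inferInstanceAs (Finite {e : E // ¬ (G.fst e ∈ U ∧ G.snd e ∈ U)})
      have hG'fst : ∀ (e : E'), G'.fst e = π (G.fst e.1) := fun _ => rfl
      have hG'snd : ∀ (e : E'), G'.snd e = π (G.snd e.1) := fun _ => rfl
      have hNEV' : Nonempty V' := ⟨none⟩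
      have hcardsub : Nat.card {v : V // v ∉ U} = (Uᶜ).ncard := by
        rw [← Nat.card_coe_set_eq]
        exact Nat.card_congr (Equiv.subtypeEquivRight (fun v => (Set.mem_compl_iff U v).symm))
      have hcardV' : Nat.card V' + U.ncard = Nat.card V + 1 := by
        have h1 : Nat.card V' = Nat.card {v : V // v ∉ U} + 1 := Finite.card_option
        rw [h1, hcardsub]
        have := Set.ncard_add_ncard_compl U
        omega
      have hU2 : 2 ≤ U.ncard :=
        (Set.one_lt_ncard (Set.toFinite U)).mpr ⟨G.fst e0, hx1U, G.snd e0, hx2U, he0NL⟩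
      have hcardV'le : Nat.card V' ≤ n := by omega
      have hconn' : ∀ X' : Set V', X'.Nonempty → X'ᶜ.Nonempty → 2*m ≤ (G'.cut X').ncard := by
        intro X' hne hnec
        have h1 : (π ⁻¹' X').Nonempty := by
          obtain ⟨x', hx'⟩ := hne
          obtain ⟨v, rfl⟩ := hπsurj x'
          exact ⟨v, hx'⟩
        have h2 : (π ⁻¹' X')ᶜ.Nonempty := by
          obtain ⟨x', hx'⟩ := hnec
          obtain ⟨v, rfl⟩ := hπsurj x'
          exact ⟨v, hx'⟩
        have himg : G.cut (π ⁻¹' X') = Subtype.val '' (G'.cut X') := by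
          ext e
          constructor
          · intro he
            have heE' : ¬ (G.fst e ∈ U ∧ G.snd e ∈ U) := by
              rintro ⟨ha', hb'⟩
              have hPi : π (G.fst e) = π (G.snd e) := (hπeq _ _).mpr (Or.inr ⟨ha', hb'⟩)
              rcases he with ⟨ha, hb⟩ | ⟨ha, hb⟩
              · exact hb (show π (G.snd e) ∈ X' by rw [← hPi]; exact ha)
              · exact ha (show π (G.fst e) ∈ X' by rw [hPi]; exact hb)
            refine ⟨⟨e, heE'⟩, ?_, rfl⟩
            exact he
          · rintro ⟨⟨e, heE'⟩, he, rfl⟩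
            exact he
        have := hconn (π ⁻¹' X') h1 h2
        rw [himg, Set.ncard_image_of_injective _ Subtype.val_injective] at this
        exact this
      obtain ⟨F', hF'prop, hF'disj⟩ := ih V' E' instV' instE' G' m hcardV'le hconn'
      let W : Fin m → Set E := fun i => {g | g ∈ F0 i ∧ G.fst g ∈ U ∧ G.snd g ∈ U}
      let T : Fin m → Set E := fun i => Subtype.val '' (F' i)
      let Ff : Fin m → Set E := fun i => T i ∪ W i
      have hsame : ∀ (i : Fin m) (a b : V), π a = π b → RR G (Ff i) a b := by
        intro i a b h
        rcases (hπeq a b).mp h with rfl | ⟨ha, hb⟩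
        · exact RR.rfl
        · exact (hWconn i a ha b hb).mono (fun g hg => Or.inr hg)
      have hlift : ∀ (i : Fin m) (a' b' : V'), RR G' (F' i) a' b' →
          ∀ a b, π a = a' → π b = b' → RR G (Ff i) a b := by
        intro i a' b' h
        induction h with
        | refl =>
          intro a b h1 h2
          exact hsame i a b (h1.trans h2.symm)
        | @tail p' q' hab hbc ihh =>
          intro a c h1 h2
          obtain ⟨⟨e, heE'⟩, heF, hends⟩ := hbc
          have heT : e ∈ Ff i := Or.inl ⟨⟨e, heE'⟩, heF, rfl⟩
          rw [hG'fst, hG'snd] at hends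
          rcases hends with ⟨hh1, hh2⟩ | ⟨hh1, hh2⟩
          · have r1 : RR G (Ff i) a (G.fst e) := ihh a (G.fst e) h1 hh1
            have r2 : RR G (Ff i) (G.fst e) (G.snd e) := RR.single heT
            have r3 : RR G (Ff i) (G.snd e) c := hsame i _ _ (hh2.trans h2.symm)
            exact (r1.trans r2).trans r3
          · have r1 : RR G (Ff i) a (G.snd e) := ihh a (G.snd e) h1 hh2
            have r2 : RR G (Ff i) (G.fst e) (G.snd e) := RR.single heT
            have r3 : RR G (Ff i) (G.fst e) c := hsame i _ _ (hh1.trans h2.symm)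
            exact (r1.trans r2.symm).trans r3
      have hFconn : ∀ i, ConnE G (Ff i) :=
        fun i x y => hlift i _ _ ((hF'prop i).2 (π x) (π y)) x y rfl rfl
      have hTcard : ∀ i, (T i).ncard + 1 = Nat.card V' := by
        intro i
        show (Subtype.val '' (F' i)).ncard + 1 = _
        rw [Set.ncard_image_of_injective _ Subtype.val_injective]
        exact indep_card_conn (hF'prop i).1 (hF'prop i).2
      have hWind : ∀ i, IndepE G (W i) := fun i => (hF0v.1 i).mono (fun g hg => hg.1)
      have hWncomp : ∀ i, ncompE G (W i) = Nat.card V' := by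
        intro i
        have hresp : ∀ v w : V, RR G (W i) v w → π v = π w := by
          intro v w h
          induction h with
          | refl => rfl
          | tail _ hstep ihh =>
            obtain ⟨g, hg, hends⟩ := hstep
            have hPi : π (G.fst g) = π (G.snd g) := (hπeq _ _).mpr (Or.inr ⟨hg.2.1, hg.2.2⟩)
            rcases hends with ⟨hh1, hh2⟩ | ⟨hh1, hh2⟩
            · exact ihh.trans (by rw [← hh1, ← hh2]; exact hPi)
            · exact ihh.trans (by rw [← hh1, ← hh2]; exact hPi.symm)
        have hbij : Function.Bijective
            (Quotient.lift π hresp : compQ G (W i) → V') := by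
          constructor
          · intro q1 q2 h
            obtain ⟨v, rfl⟩ := Quotient.exists_rep q1
            obtain ⟨w, rfl⟩ := Quotient.exists_rep q2
            have hvw : π v = π w := h
            rcases (hπeq v w).mp hvw with rfl | ⟨hv, hw⟩
            · rfl
            · exact Quotient.sound (hWconn i v hv w hw)
          · intro v'
            obtain ⟨v, rfl⟩ := hπsurj v'
            exact ⟨Quotient.mk _ v, rfl⟩
        exact Nat.card_eq_of_bijective _ hbij
      have hWcard : ∀ i, (W i).ncard + Nat.card V' = Nat.card V := by
        intro i
        have := rank_eq (hWind i)
        rw [hWncomp i] at this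
        exact this
      have hV'pos : 1 ≤ Nat.card V' := Nat.card_pos
      have hFfcard : ∀ i, (Ff i).ncard + 1 ≤ Nat.card V := by
        intro i
        have hle := Set.ncard_union_le (T i) (W i)
        have h1 := hTcard i
        have h2 := hWcard i
        show (T i ∪ W i).ncard + 1 ≤ Nat.card V
        omega
      have hFind : ∀ i, IndepE G (Ff i) := fun i => indep_of_conn_card (hFconn i) (hFfcard i)
      have hFdisj : ∀ i j, i ≠ j → Disjoint (Ff i) (Ff j) := by
        intro i j hij
        rw [Set.disjoint_left]
        rintro g (hgT | hgW) hg'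
        · obtain ⟨e1, he1, rfl⟩ := hgT
          rcases hg' with hgT' | hgW'
          · obtain ⟨e2, he2, heq⟩ := hgT'
            have : e2 = e1 := Subtype.val_injective heq
            exact Set.disjoint_left.mp (hF'disj i j hij) he1 (this ▸ he2)
          · exact e1.2 ⟨hgW'.2.1, hgW'.2.2⟩
        · rcases hg' with hgT' | hgW'
          · obtain ⟨e2, he2, heq⟩ := hgT'
            exact e2.2 (heq ▸ ⟨hgW.2.1, hgW.2.2⟩)
          · exact Set.disjoint_left.mp (hF0v.2 i j hij) hgW.1 hgW'.1
      exact ⟨Ff, fun i => ⟨hFind i, hFconn i⟩, hFdisj⟩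

end
end NWAux
namespace NWAux
open Classical Relation
noncomputable section
variable {V E : Type} {G : Multigraph V E}

lemma isWalk_nil {x : V} : G.IsWalk x x [] := ⟨List.isChain_nil, Or.inl ⟨rfl, rfl⟩⟩

lemma isWalk_cons {y : V} {s : E × Bool} {l : List (E × Bool)}
    (h : G.IsWalk (G.dst s) y l) : G.IsWalk (G.src s) y (s :: l) := by
  obtain ⟨hch, hor⟩ := h
  rcases hor with ⟨rfl, rfl⟩ | ⟨s', t', hh, hl, hsrc, hdst⟩
  · exact ⟨List.isChain_singleton s, Or.inr ⟨s, s, rfl, rfl, rfl, rfl⟩⟩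
  · have hlne : l ≠ [] := by intro hc; rw [hc] at hh; simp at hh
    refine ⟨?_, Or.inr ⟨s, t', rfl, ?_, rfl, hdst⟩⟩
    · refine List.isChain_cons.mpr ⟨?_, hch⟩
      intro u hu
      rw [hh] at hu
      cases hu
      exact hsrc.symm
    · cases l with
      | nil => exact absurd rfl hlne
      | cons a as => rw [List.getLast?_cons_cons]; exact hl

lemma isWalk_cons_elim {x y : V} {s : E × Bool} {l : List (E × Bool)}
    (h : G.IsWalk x y (s :: l)) : G.src s = x ∧ G.IsWalk (G.dst s) y l := by
  obtain ⟨hch, hor⟩ := h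
  rcases hor with ⟨hc, _⟩ | ⟨s', t', hh, hl, hsrc, hdst⟩
  · exact absurd hc (List.cons_ne_nil s l)
  · rw [List.head?_cons, Option.some_inj] at hh
    subst hh
    refine ⟨hsrc, ?_⟩
    have hch' := List.isChain_cons.mp hch
    cases l with
    | nil =>
      simp only [List.getLast?_singleton, Option.some_inj] at hl
      subst hl
      exact ⟨List.isChain_nil, Or.inl ⟨rfl, hdst⟩⟩
    | cons a as =>
      refine ⟨hch'.2, Or.inr ⟨a, t', rfl, ?_, ?_, hdst⟩⟩
      · rw [← List.getLast?_cons_cons (a := s)]; exact hl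
      · exact (hch'.1 a rfl).symm

lemma adjE_of_step {F : Set E} {s : E × Bool} (hs : s.1 ∈ F) :
    adjE G F (G.src s) (G.dst s) := by
  refine ⟨s.1, hs, ?_⟩
  rcases s with ⟨e, b⟩
  cases b
  · right; exact ⟨rfl, rfl⟩
  · left; exact ⟨rfl, rfl⟩

lemma RR_toWalk {F : Set E} {x y : V} (h : RR G F x y) :
    ∃ l, G.IsWalk x y l ∧ ∀ s ∈ l, s.1 ∈ F := by
  induction h using Relation.ReflTransGen.head_induction_on with
  | refl => exact ⟨[], isWalk_nil, fun s hs => absurd hs (List.not_mem_nil (a := s))⟩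
  | @head a c hstep htail ihh =>
    obtain ⟨l, hw, hmem⟩ := ihh
    obtain ⟨g, hg, hends⟩ := hstep
    rcases hends with ⟨h1, h2⟩ | ⟨h1, h2⟩
    · refine ⟨(g, true) :: l, ?_, ?_⟩
      · have : G.src (g, true) = a := h1
        rw [← this]
        exact isWalk_cons (by rw [show G.dst (g, true) = c from h2]; exact hw)
      · intro s hs
        rcases List.mem_cons.mp hs with rfl | hs'
        · exact hg
        · exact hmem s hs'
    · refine ⟨(g, false) :: l, ?_, ?_⟩
      · have : G.src (g, false) = a := h2
        rw [← this]
        exact isWalk_cons (by rw [show G.dst (g, false) = c from h1]; exact hw)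
      · intro s hs
        rcases List.mem_cons.mp hs with rfl | hs'
        · exact hg
        · exact hmem s hs'

lemma isWalk_RR {F : Set E} {x y : V} {l : List (E × Bool)}
    (h : G.IsWalk x y l) (hF : ∀ s ∈ l, s.1 ∈ F) : RR G F x y := by
  induction l generalizing x with
  | nil =>
    rcases h.2 with ⟨_, rfl⟩ | ⟨s', t', hh, _, _, _⟩
    · exact RR.rfl
    · exact absurd hh (by simp)
  | cons s rest ih =>
    obtain ⟨hsrc, hw⟩ := isWalk_cons_elim h
    have hstep : RR G F x (G.dst s) := by
      rw [← hsrc]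
      exact Relation.ReflTransGen.single (adjE_of_step (hF s (List.mem_cons_self (a := s) (l := rest))))
    exact hstep.trans (ih hw (fun t ht => hF t (List.mem_cons_of_mem s ht)))

lemma indep_no_closed_trail {T : Set E} (hF : IndepE G T) (v : V)
    (l : List (E × Bool)) (hne : l ≠ []) (ht : G.IsTrail v v l)
    (hmem : ∀ s ∈ l, s.1 ∈ T) : False := by
  obtain ⟨hw, hnd⟩ := ht
  cases l with
  | nil => exact hne rfl
  | cons s rest =>
    obtain ⟨hsrc, hw'⟩ := isWalk_cons_elim hw
    have hsnotin : s.1 ∉ rest.map Prod.fst := by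
      rw [List.map_cons] at hnd
      exact (List.nodup_cons.mp hnd).1
    have hrest : ∀ t ∈ rest, t.1 ∈ T \ {s.1} := by
      intro t ht'
      refine ⟨hmem t (List.mem_cons_of_mem s ht'), ?_⟩
      intro hc
      exact hsnotin (by rw [← hc]; exact List.mem_map_of_mem (f := Prod.fst) ht')
    have hRR : RR G (T \ {s.1}) (G.dst s) (G.src s) := by
      rw [hsrc]
      exact isWalk_RR hw' hrest
    have hsm : s.1 ∈ T := hmem s (List.mem_cons_self (a := s) (l := rest))
    rcases s with ⟨e, b⟩
    cases b
    · exact hF e hsm (show RR G (T \ {e}) (G.fst e) (G.snd e) from hRR)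
    · exact hF e hsm (show RR G (T \ {e}) (G.fst e) (G.snd e) from hRR.symm)

lemma toSpanningTree {T : Set E} (hI : IndepE G T) (hC : ConnE G T) :
    G.IsSpanningTree T := by
  constructor
  · intro x y
    exact RR_toWalk (hC x y)
  · intro v l hne ht hmem
    exact indep_no_closed_trail hI v l hne ht hmem

end
end NWAux
namespace NWAux
open Classical Relation
noncomputable section
variable {V E : Type} {G : Multigraph V E}

lemma diwalk_nil {o : E → Bool} {x : V} : G.IsDiWalk o x x [] :=
  ⟨List.isChain_nil, Or.inl ⟨rfl, rfl⟩⟩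

lemma diwalk_single {o : E → Bool} {x y : V} {e : E}
    (h1 : G.tailO o e = x) (h2 : G.headO o e = y) : G.IsDiWalk o x y [e] :=
  ⟨List.isChain_singleton e, Or.inr ⟨e, e, rfl, rfl, h1, h2⟩⟩

lemma diwalk_append {o : E → Bool} {x y z : V} {l1 l2 : List E}
    (h1 : G.IsDiWalk o x y l1) (h2 : G.IsDiWalk o y z l2) :
    G.IsDiWalk o x z (l1 ++ l2) := by
  obtain ⟨hc1, he1⟩ := h1
  obtain ⟨hc2, he2⟩ := h2
  rcases he1 with ⟨rfl, rfl⟩ | ⟨e1, f1, hh1, hl1, ht1, hd1⟩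
  · simpa using ⟨hc2, he2⟩
  rcases he2 with ⟨rfl, rfl⟩ | ⟨e2, f2, hh2, hl2, ht2, hd2⟩
  · simpa using ⟨hc1, Or.inr ⟨e1, f1, hh1, hl1, ht1, hd1⟩⟩
  have hne1 : l1 ≠ [] := by intro hc; rw [hc] at hh1; simp at hh1
  have hne2 : l2 ≠ [] := by intro hc; rw [hc] at hh2; simp at hh2
  constructor
  · rw [List.Chain', List.isChain_append]
    refine ⟨hc1, hc2, ?_⟩
    intro a ha b hb
    rw [hl1] at ha; rw [hh2] at hb
    cases ha; cases hb
    rw [hd1, ht2]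
  · refine Or.inr ⟨e1, f2, ?_, ?_, ht1, hd2⟩
    · rw [List.head?_append_of_ne_nil _ hne1]; exact hh1
    · rw [List.getLast?_append_of_ne_nil _ hne2]; exact hl2

lemma diwalk_reverse {o : E → Bool} {x y : V} {l : List E}
    (h : G.IsDiWalk (fun e => !o e) x y l) : G.IsDiWalk o y x l.reverse := by
  have htl : ∀ e, G.tailO o e = G.headO (fun e => !o e) e := by
    intro e
    unfold Multigraph.tailO Multigraph.headO
    cases hoe : o e <;> simp [hoe]
  have hhd : ∀ e, G.headO o e = G.tailO (fun e => !o e) e := by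
    intro e
    unfold Multigraph.tailO Multigraph.headO
    cases hoe : o e <;> simp [hoe]
  obtain ⟨hc, he⟩ := h
  constructor
  · rw [List.Chain', List.isChain_reverse]
    refine hc.imp ?_
    intro a b hab
    show G.headO o b = G.tailO o a
    rw [htl a, hhd b, hab]
  · rcases he with ⟨rfl, rfl⟩ | ⟨e, f, hh, hl, ht, hd⟩
    · exact Or.inl ⟨rfl, rfl⟩
    · refine Or.inr ⟨f, e, ?_, ?_, ?_, ?_⟩
      · rw [List.head?_reverse]; exact hl
      · rw [List.getLast?_reverse]; exact hh
      · rw [htl f]; exact hd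
      · rw [hhd e]; exact ht

lemma rr_other_end [Finite E] {T : Set E} {e : E} {r : V} (hC : ConnE G T) (he : e ∈ T)
    (h : ¬ RR G (T \ {e}) r (G.fst e)) : RR G (T \ {e}) r (G.snd e) := by
  have hTr : RR G T r (G.snd e) := hC r (G.snd e)
  have hT : T = insert e (T \ {e}) := by
    rw [Set.insert_diff_singleton, Set.insert_eq_self.mpr he]
  rw [hT] at hTr
  rcases RR_insert hTr with hc | ⟨h1, h2⟩ | ⟨h1, h2⟩
  · exact hc
  · exact absurd h1 h
  · exact h1

lemma away_walk [Finite E] {T : Set E} (hI : IndepE G T) (hC : ConnE G T) (r : V) (o : E → Bool)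
    (ho : ∀ e ∈ T, RR G (T \ {e}) r (G.tailO o e)) (w : V) :
    ∃ l : List E, G.IsDiWalk o r w l ∧ l.Nodup ∧ ∀ e ∈ l, e ∈ T ∧ ¬ RR G (T \ {e}) r w := by
  generalize hμ : (bridges G T r w).ncard = μ
  induction μ using Nat.strong_induction_on generalizing w with
  | _ μ ih =>
  by_cases hwr : w = r
  · subst hwr
    exact ⟨[], diwalk_nil, List.nodup_nil, fun e he => absurd he (List.not_mem_nil (a := e))⟩
  have hrw : RR G T r w := hC r w
  have hkey := RR_bridges hI hrw
  rcases Relation.ReflTransGen.cases_tail hkey with heq | ⟨p, hrp, hstep⟩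
  · exact absurd heq hwr
  obtain ⟨e, heB, hends⟩ := hstep
  obtain ⟨heT, heNb⟩ := heB
  have hT : T = insert e (T \ {e}) := by
    rw [Set.insert_diff_singleton, Set.insert_eq_self.mpr heT]
  have hrp' : RR G (T \ {e}) r p := by
    have hTp : RR G T r p := hC r p
    rw [hT] at hTp
    rcases RR_insert hTp with hc | ⟨h1, h2⟩ | ⟨h1, h2⟩
    · exact hc
    · rcases hends with ⟨hf, hs⟩ | ⟨hf, hs⟩
      · exact hf ▸ h1
      · exact absurd (hf ▸ h1) heNb
    · rcases hends with ⟨hf, hs⟩ | ⟨hf, hs⟩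
      · exact absurd (hs ▸ h1) heNb
      · exact hs ▸ h1
  have htail : G.tailO o e = p ∧ G.headO o e = w := by
    have hot := ho e heT
    unfold Multigraph.tailO Multigraph.headO at *
    cases hoe : o e
    · simp only [hoe, if_neg Bool.false_ne_true] at hot ⊢
      rcases hends with ⟨hf, hs⟩ | ⟨hf, hs⟩
      · exact absurd (hs ▸ hot) heNb
      · exact ⟨hs, hf⟩
    · simp only [hoe, if_pos rfl] at hot ⊢
      rcases hends with ⟨hf, hs⟩ | ⟨hf, hs⟩
      · exact ⟨hf, hs⟩
      · exact absurd (hf ▸ hot) heNb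
  have hsub : bridges G T r p ⊆ bridges G T r w := by
    rintro e' ⟨he'T, he'b⟩
    refine ⟨he'T, fun hcon => he'b ?_⟩
    by_cases hee' : e' = e
    · subst hee'
      exact absurd hcon heNb
    · have heme : e ∈ T \ {e'} := ⟨heT, fun hc => hee' (hc.symm)⟩
      have hstep' : RR G (T \ {e'}) w p := by
        rcases hends with ⟨hf, hs⟩ | ⟨hf, hs⟩
        · exact (hf ▸ hs ▸ RR.single heme).symm
        · exact hf ▸ hs ▸ RR.single heme
      exact hcon.trans hstep'
  have heNp : e ∉ bridges G T r p := fun hc => hc.2 hrp'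
  have hlt : (bridges G T r p).ncard < μ := by
    rw [← hμ]
    exact Set.ncard_lt_ncard ⟨hsub, fun hall => heNp (hall ⟨heT, heNb⟩)⟩ (Set.toFinite _)
  obtain ⟨lp, hwp, hnd, hprop⟩ := ih _ hlt p rfl
  refine ⟨lp ++ [e], diwalk_append hwp (diwalk_single htail.1 htail.2), ?_, ?_⟩
  · refine hnd.append (List.nodup_singleton e) ?_
    intro a ha hb
    rw [List.mem_singleton] at hb
    subst hb
    exact heNp ⟨heT, (hprop a ha).2⟩
  · intro e' he'
    rcases List.mem_append.mp he' with h | h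
    · exact hsub ⟨(hprop e' h).1, (hprop e' h).2⟩
    · rw [List.mem_singleton] at h
      subst h
      exact ⟨heT, heNb⟩

lemma toward_walk [Finite E] {T : Set E} (hI : IndepE G T) (hC : ConnE G T) (r : V) (o : E → Bool)
    (ho : ∀ e ∈ T, RR G (T \ {e}) r (G.headO o e)) (w : V) :
    ∃ l : List E, G.IsDiWalk o w r l ∧ l.Nodup ∧ ∀ e ∈ l, e ∈ T := by
  have ho' : ∀ e ∈ T, RR G (T \ {e}) r (G.tailO (fun e => !o e) e) := by
    intro e he
    have heq : G.tailO (fun e => !o e) e = G.headO o e := by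
      unfold Multigraph.tailO Multigraph.headO
      cases hoe : o e <;> simp [hoe]
    rw [heq]
    exact ho e he
  obtain ⟨l, hw, hnd, hmem⟩ := away_walk hI hC r (fun e => !o e) ho' w
  refine ⟨l.reverse, diwalk_reverse hw, List.nodup_reverse.mpr hnd, ?_⟩
  intro e he
  exact (hmem e (List.mem_reverse.mp he)).1

end
end NWAux
open NWAux in
open NW in
/-- Every finite 4k-edge-connected multigraph has 2k pairwise edge-disjoint spanning
trees, and consequently a k-arc-connected orientation. -/
theorem stmt15 {V E : Type} [Finite V] [Finite E] (G : Multigraph V E)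
    (k : ℕ) (hconn : G.EdgeConnected (4 * k)) :
    (∃ T : Fin (2 * k) → Set E, (∀ i, G.IsSpanningTree (T i)) ∧
      ∀ i j, i ≠ j → Disjoint (T i) (T j)) ∧
    ∃ o : E → Bool, ∀ v w : V, v ≠ w → G.DiConnAtLeast o v w k := by
  classical
  obtain ⟨F, hFprop, hFdisj⟩ := NWAux.core_packing (Nat.card V) V E ‹Finite V› ‹Finite E›
    G (2*k) le_rfl (by
      intro X h1 h2
      have h := hconn X h1 h2
      calc 2*(2*k) = 4*k := by ring
        _ ≤ _ := h)
  refine ⟨⟨F, fun i => NWAux.toSpanningTree (hFprop i).1 (hFprop i).2, hFdisj⟩, ?_⟩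
  by_cases hk : k = 0
  · subst hk
    exact ⟨fun _ => true, fun v w _ => ⟨Fin.elim0, fun i => i.elim0, fun i _ _ => i.elim0⟩⟩
  by_cases hV : Nonempty V
  swap
  · exact ⟨fun _ => true, fun v w _ => (hV ⟨v⟩).elim⟩
  obtain ⟨r⟩ := hV
  have huniq : ∀ (i j : Fin (2*k)) (e : E), e ∈ F i → e ∈ F j → i = j := by
    intro i j e hi hj
    by_contra hij
    exact Set.disjoint_left.mp (hFdisj i j hij) hi hj
  let o : E → Bool := fun e =>
    if h : ∃ i, e ∈ F i then
      (if (Classical.choose h).1 < k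
       then decide (RR G (F (Classical.choose h) \ {e}) r (G.fst e))
       else !decide (RR G (F (Classical.choose h) \ {e}) r (G.fst e)))
    else true
  have hoeq : ∀ (i : Fin (2*k)) (e : E), e ∈ F i →
      o e = (if i.1 < k then decide (RR G (F i \ {e}) r (G.fst e))
             else !decide (RR G (F i \ {e}) r (G.fst e))) := by
    intro i e he
    have hex : ∃ j, e ∈ F j := ⟨i, he⟩
    have hch : Classical.choose hex = i := huniq _ _ _ (Classical.choose_spec hex) he
    show (if h : ∃ i, e ∈ F i then _ else true) = _
    rw [dif_pos hex, hch]
  have htail : ∀ (i : Fin (2*k)), i.1 < k → ∀ e ∈ F i,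
      RR G (F i \ {e}) r (G.tailO o e) := by
    intro i hik e he
    have h1 := hoeq i e he
    rw [if_pos hik] at h1
    unfold Multigraph.tailO
    rw [h1]
    by_cases hRR : RR G (F i \ {e}) r (G.fst e)
    · rw [decide_eq_true hRR, if_pos rfl]
      exact hRR
    · rw [decide_eq_false hRR, if_neg Bool.false_ne_true]
      exact rr_other_end (hFprop i).2 he hRR
  have hhead : ∀ (i : Fin (2*k)), ¬ (i.1 < k) → ∀ e ∈ F i,
      RR G (F i \ {e}) r (G.headO o e) := by
    intro i hik e he
    have h1 := hoeq i e he
    rw [if_neg hik] at h1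
    unfold Multigraph.headO
    rw [h1]
    by_cases hRR : RR G (F i \ {e}) r (G.fst e)
    · rw [decide_eq_true hRR, Bool.not_true, if_neg Bool.false_ne_true]
      exact hRR
    · rw [decide_eq_false hRR, Bool.not_false, if_pos rfl]
      exact rr_other_end (hFprop i).2 he hRR
  refine ⟨o, ?_⟩
  intro v w hvw
  have hpath : ∀ i : Fin k, ∃ l : List E, G.IsDiWalk o v w l ∧ l.Nodup ∧
      ∀ e ∈ l, e ∈ F ⟨i.1, by omega⟩ ∨ e ∈ F ⟨k + i.1, by omega⟩ := by
    intro i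
    have hik : i.1 < k := i.2
    obtain ⟨l1, hw1, hnd1, hm1⟩ := toward_walk
      (hFprop ⟨k + i.1, by omega⟩).1 (hFprop ⟨k + i.1, by omega⟩).2 r o
      (hhead ⟨k + i.1, by omega⟩ (by show ¬ (k + i.1 < k); omega)) v
    obtain ⟨l2, hw2, hnd2, hm2⟩ := away_walk
      (hFprop ⟨i.1, by omega⟩).1 (hFprop ⟨i.1, by omega⟩).2 r o
      (htail ⟨i.1, by omega⟩ (by show i.1 < k; omega)) w
    refine ⟨l1 ++ l2, diwalk_append hw1 hw2, ?_, ?_⟩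
    · refine hnd1.append hnd2 ?_
      intro a ha hb
      have h1 := hm1 a ha
      have h2 := (hm2 a hb).1
      have hne : (⟨i.1, by omega⟩ : Fin (2*k)) ≠ ⟨k + i.1, by omega⟩ := by
        intro hc
        have := congrArg Fin.val hc
        simp at this
        omega
      exact Set.disjoint_left.mp (hFdisj _ _ hne) h2 h1
    · intro e he
      rcases List.mem_append.mp he with h | h
      · exact Or.inr (hm1 e h)
      · exact Or.inl (hm2 e h).1
  choose g hg1 hg2 hg3 using hpath
  refine ⟨g, fun i => ⟨hg1 i, hg2 i⟩, ?_⟩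
  intro i j hij
  intro e hei hej
  have hvne : i.1 ≠ j.1 := fun hc => hij (Fin.ext hc)
  have hik : i.1 < k := i.2
  have hjk : j.1 < k := j.2
  have hdis : ∀ (a b : Fin (2*k)), a.1 ≠ b.1 → e ∈ F a → e ∈ F b → False := by
    intro a b hab ha hb
    exact Set.disjoint_left.mp (hFdisj a b (fun hc => hab (congrArg Fin.val hc))) ha hb
  rcases hg3 i e hei with h1 | h1 <;> rcases hg3 j e hej with h2 | h2
  · exact hdis _ _ (show i.1 ≠ j.1 from hvne) h1 h2
  · exact hdis _ _ (show i.1 ≠ k + j.1 by omega) h1 h2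
  · exact hdis _ _ (show k + i.1 ≠ j.1 by omega) h1 h2
  · exact hdis _ _ (show k + i.1 ≠ k + j.1 by omega) h1 h2
end

section
/- Every connected multigraph (finite or infinite) that is 2-edge-connected admits a strongly connected orientation, i.e. an orientation in which from every vertex to every other vertex there is a directed path. -/
open NW NW.Multigraph

section EgyedAux

open NW NW.Multigraph Classical

variable {V E : Type} {G : Multigraph V E}

/-- Inductive characterization of walks. -/
inductive GW (G : Multigraph V E) : V → V → List (E × Bool) → Prop
  | nil (x : V) : GW G x x []
  | cons {x y : V} {s : E × Bool} {l : List (E × Bool)}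
      (hx : G.src s = x) (h : GW G (G.dst s) y l) : GW G x y (s :: l)

/-- Inductive characterization of directed walks. -/
inductive DW (G : Multigraph V E) (o : E → Bool) : V → V → List E → Prop
  | nil (x : V) : DW G o x x []
  | cons {x y : V} {e : E} {l : List E}
      (hx : G.tailO o e = x) (h : DW G o (G.headO o e) y l) : DW G o x y (e :: l)

lemma gw_append {x y z : V} {l m : List (E × Bool)}
    (h1 : GW G x y l) (h2 : GW G y z m) : GW G x z (l ++ m) := by
  induction h1 with
  | nil => simpa using h2
  | cons hx h ih => exact GW.cons hx (ih h2)

lemma dw_append {o : E → Bool} {x y z : V} {l m : List E}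
    (h1 : DW G o x y l) (h2 : DW G o y z m) : DW G o x z (l ++ m) := by
  induction h1 with
  | nil => simpa using h2
  | cons hx h ih => exact DW.cons hx (ih h2)

lemma isWalk_gw : ∀ {l : List (E × Bool)} {x y : V}, G.IsWalk x y l → GW G x y l := by
  intro l
  induction l with
  | nil =>
    rintro x y ⟨-, h⟩
    rcases h with ⟨-, rfl⟩ | ⟨s, t, hs, -⟩
    · exact GW.nil x
    · simp at hs
  | cons s l ih =>
    rintro x y ⟨hc, h⟩
    rcases h with ⟨h, -⟩ | ⟨s', t, hs, hl, hsrc, hdst⟩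
    · simp at h
    · obtain rfl : s = s' := by simpa using hs
      rcases List.isChain_cons.mp hc with ⟨hrel, hc'⟩
      refine GW.cons hsrc (ih ?_)
      cases l with
      | nil =>
        obtain rfl : s = t := by simpa using hl
        exact ⟨List.isChain_nil, Or.inl ⟨rfl, hdst⟩⟩
      | cons s2 l2 =>
        refine ⟨hc', Or.inr ⟨s2, t, rfl, ?_, (hrel s2 rfl).symm, hdst⟩⟩
        simpa using hl

lemma dw_isDiWalk {o : E → Bool} :
    ∀ {l : List E} {x y : V}, DW G o x y l → G.IsDiWalk o x y l := by
  intro l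
  induction l with
  | nil =>
    intro x y h
    cases h
    exact ⟨List.isChain_nil, Or.inl ⟨rfl, rfl⟩⟩
  | cons e l ih =>
    intro x y h
    cases h with
    | cons hx h =>
      obtain ⟨hc, hend⟩ := ih h
      cases l with
      | nil =>
        rcases hend with ⟨-, hy⟩ | ⟨s, t, hs, -⟩
        · exact ⟨List.isChain_singleton e, Or.inr ⟨e, e, rfl, rfl, hx, hy⟩⟩
        · simp at hs
      | cons e2 l2 =>
        rcases hend with ⟨h, -⟩ | ⟨s, t, hs, hl, hsrc, hdst⟩
        · simp at h
        · obtain rfl : e2 = s := by simpa using hs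
          refine ⟨List.isChain_cons_cons.mpr ⟨hsrc.symm, hc⟩,
            Or.inr ⟨e, t, rfl, ?_, hx, hdst⟩⟩
          simpa using hl

/-- Flip a step. -/
def flipS (s : E × Bool) : E × Bool := (s.1, !s.2)

lemma src_flipS (s : E × Bool) : G.src (flipS s) = G.dst s := by
  rcases s with ⟨e, b⟩; cases b <;> simp [Multigraph.src, Multigraph.dst, flipS]

lemma dst_flipS (s : E × Bool) : G.dst (flipS s) = G.src s := by
  rcases s with ⟨e, b⟩; cases b <;> simp [Multigraph.src, Multigraph.dst, flipS]

lemma gw_reverse {x y : V} {l : List (E × Bool)} (h : GW G x y l) :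
    GW G y x (l.reverse.map flipS) := by
  induction h with
  | nil => exact GW.nil _
  | @cons x y s l hx h ih =>
    have hstep : GW G (G.dst s) x [flipS s] := by
      refine GW.cons (src_flipS s) ?_
      rw [dst_flipS, hx]
      exact GW.nil x
    have := gw_append ih hstep
    simpa using this

lemma gw_split {x y : V} {l : List (E × Bool)} (h : GW G x y l) :
    ∀ s ∈ l, ∃ l₁ l₂, l = l₁ ++ s :: l₂ ∧ GW G x (G.src s) l₁ ∧ GW G (G.dst s) y l₂ := by
  induction h with
  | nil => simp
  | @cons x y s' l hx h ih =>
    intro s hs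
    rcases List.mem_cons.mp hs with rfl | hs
    · exact ⟨[], l, rfl, hx ▸ GW.nil _, h⟩
    · obtain ⟨l₁, l₂, rfl, h1, h2⟩ := ih s hs
      exact ⟨s' :: l₁, l₂, rfl, GW.cons hx h1, h2⟩

lemma gw_cross {Wv : Set V} {x y : V} {l : List (E × Bool)} (h : GW G x y l)
    (hx : x ∈ Wv) (hy : y ∉ Wv) : ∃ s ∈ l, G.src s ∈ Wv ∧ G.dst s ∉ Wv := by
  induction h with
  | nil => exact absurd hx hy
  | @cons x y s l hsx h ih =>
    by_cases hd : G.dst s ∈ Wv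
    · obtain ⟨s', hs', h1, h2⟩ := ih hd hy
      exact ⟨s', List.mem_cons_of_mem _ hs', h1, h2⟩
    · exact ⟨s, List.mem_cons_self, hsx ▸ hx, hd⟩

lemma gw_toSet {T : Set V} {x y : V} {l : List (E × Bool)} (h : GW G x y l)
    (hx : x ∉ T) (hy : y ∈ T) :
    ∃ z ∈ T, ∃ q, GW G x z q ∧ (∀ s ∈ q, s ∈ l) ∧ ∀ s ∈ q, G.src s ∉ T := by
  induction h with
  | nil => exact absurd hy hx
  | @cons x y s l hsx h ih =>
    by_cases hd : G.dst s ∈ T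
    · refine ⟨G.dst s, hd, [s], GW.cons hsx (GW.nil _), by simp, ?_⟩
      intro s' hs'
      rcases List.mem_singleton.mp hs' with rfl
      exact hsx ▸ hx
    · obtain ⟨z, hz, q, hq, hsub, hsrc⟩ := ih hd hy
      refine ⟨z, hz, s :: q, GW.cons hsx hq, ?_, ?_⟩
      · intro s' hs'
        rcases List.mem_cons.mp hs' with rfl | hs'
        · exact List.mem_cons_self
        · exact List.mem_cons_of_mem _ (hsub s' hs')
      · intro s' hs'
        rcases List.mem_cons.mp hs' with rfl | hs'
        · exact hsx ▸ hx
        · exact hsrc s' hs'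

lemma gw_simplify : ∀ {l : List (E × Bool)} {x y : V}, GW G x y l →
    ∃ q, GW G x y q ∧ (∀ s ∈ q, s ∈ l) ∧ (x :: q.map G.dst).Nodup := by
  intro l
  induction l with
  | nil =>
    intro x y h
    cases h
    exact ⟨[], GW.nil _, by simp, by simp⟩
  | cons s l ih =>
    intro x y h
    cases h with
    | cons hsx h =>
      obtain ⟨q, hq, hsub, hnd⟩ := ih h
      by_cases hx : x ∈ G.dst s :: q.map G.dst
      · rcases List.mem_cons.mp hx with hx | hx
        · -- x = dst s : drop s entirely
          refine ⟨q, hx ▸ hq, fun s' hs' => List.mem_cons_of_mem _ (hsub s' hs'), ?_⟩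
          rw [hx]; exact hnd
        · -- x = dst t for some t ∈ q
          obtain ⟨t, ht, hxt⟩ := List.mem_map.mp hx
          obtain ⟨q₁, q₂, rfl, -, h2⟩ := gw_split hq t ht
          refine ⟨q₂, hxt ▸ h2, ?_, ?_⟩
          · intro s' hs'
            exact List.mem_cons_of_mem _ (hsub s' (by simp [hs']))
          · have hsuf : (G.dst t :: q₂.map G.dst) <:+ (G.dst s :: (q₁ ++ t :: q₂).map G.dst) := by
              refine ⟨G.dst s :: q₁.map G.dst, ?_⟩
              simp
            rw [← hxt]
            exact hnd.sublist hsuf.sublist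
      · exact ⟨s :: q, GW.cons hsx hq,
          fun s' hs' => by
            rcases List.mem_cons.mp hs' with rfl | hs'
            · exact List.mem_cons_self
            · exact List.mem_cons_of_mem _ (hsub s' hs'),
          by rw [List.map_cons]; exact List.nodup_cons.mpr ⟨hx, hnd⟩⟩

lemma gw_src_mem {x y : V} {l : List (E × Bool)} (h : GW G x y l) :
    ∀ s ∈ l, G.src s ∈ x :: l.map G.dst := by
  induction h with
  | nil => simp
  | @cons x y s' l hx h ih =>
    intro s hs
    rcases List.mem_cons.mp hs with rfl | hs
    · rw [hx]; exact List.mem_cons_self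
    · have := ih s hs
      rcases List.mem_cons.mp this with h1 | h1
      · simp [h1]
      · simp [List.mem_cons_of_mem, h1]

lemma step_ends (s : E × Bool) :
    (G.src s = G.fst s.1 ∧ G.dst s = G.snd s.1) ∨
    (G.src s = G.snd s.1 ∧ G.dst s = G.fst s.1) := by
  rcases s with ⟨e, b⟩
  cases b
  · exact Or.inr ⟨rfl, rfl⟩
  · exact Or.inl ⟨rfl, rfl⟩

lemma gw_nodup_fst : ∀ {q : List (E × Bool)} {x y : V}, GW G x y q →
    (x :: q.map G.dst).Nodup → (q.map Prod.fst).Nodup := by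
  intro q
  induction q with
  | nil => simp
  | cons s q ih =>
    intro x y h hnd
    cases h with
    | cons hsx h =>
      have hnd' : (G.dst s :: q.map G.dst).Nodup := by
        simpa using hnd.of_cons
      have hxnot : x ∉ G.dst s :: q.map G.dst := by
        simpa using (List.nodup_cons.mp hnd).1
      refine List.nodup_cons.mpr ⟨?_, ih h hnd'⟩
      intro hmem
      obtain ⟨s', hs', hfst⟩ := List.mem_map.mp hmem
      have hsrc' : G.src s' ∈ G.dst s :: q.map G.dst := gw_src_mem h s' hs'
      have hdst' : G.dst s' ∈ G.dst s :: q.map G.dst :=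
        List.mem_cons_of_mem _ (List.mem_map.mpr ⟨s', hs', rfl⟩)
      -- endpoints of s' are the endpoints of s, one of which is x
      rcases step_ends (G := G) s with ⟨h1, h2⟩ | ⟨h1, h2⟩ <;>
        rcases step_ends (G := G) s' with ⟨h1', h2'⟩ | ⟨h1', h2'⟩
      · exact hxnot (hsx ▸ (h1 ▸ hfst ▸ h1' ▸ hsrc' : G.src s ∈ _))
      · exact hxnot (hsx ▸ (h1 ▸ hfst ▸ h2' ▸ hdst' : G.src s ∈ _))
      · exact hxnot (hsx ▸ (h1 ▸ hfst ▸ h2' ▸ hdst' : G.src s ∈ _))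
      · exact hxnot (hsx ▸ (h1 ▸ hfst ▸ h1' ▸ hsrc' : G.src s ∈ _))

lemma dw_congr {o o' : E → Bool} {x y : V} {l : List E}
    (ho : ∀ e ∈ l, o e = o' e) (h : DW G o x y l) : DW G o' x y l := by
  induction h with
  | nil => exact DW.nil _
  | @cons x y e l hx h ih =>
    have he : o e = o' e := ho e (List.mem_cons_self)
    refine DW.cons (x := x) ?_ ?_
    · rw [Multigraph.tailO, ← he, ← Multigraph.tailO]; exact hx
    · have : G.headO o e = G.headO o' e := by rw [Multigraph.headO, Multigraph.headO, he]
      rw [← this]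
      exact ih fun e' he' => ho e' (List.mem_cons_of_mem _ he')

lemma tail_head_of_orient {o : E → Bool} {s : E × Bool} (h : o s.1 = s.2) :
    G.tailO o s.1 = G.src s ∧ G.headO o s.1 = G.dst s := by
  rcases s with ⟨e, b⟩
  simp only at h
  cases b <;> simp [Multigraph.tailO, Multigraph.headO, Multigraph.src, Multigraph.dst, h]

lemma gw_dw {o : E → Bool} {x y : V} {q : List (E × Bool)} (h : GW G x y q)
    (ho : ∀ s ∈ q, o s.1 = s.2) : DW G o x y (q.map Prod.fst) := by
  induction h with
  | nil => exact DW.nil _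
  | @cons x y s l hx h ih =>
    obtain ⟨ht, hh⟩ := tail_head_of_orient (G := G) (ho s (List.mem_cons_self))
    exact DW.cons (ht.trans hx) (hh ▸ ih fun s' hs' => ho s' (List.mem_cons_of_mem _ hs'))

/-- Set of vertices covered by a set of edges. -/
def Wset (G : Multigraph V E) (F : Set E) : Set V := {v | ∃ e ∈ F, G.Inc e v}

/-- Directed reachability within an edge set. -/
def DWin (G : Multigraph V E) (o : E → Bool) (F : Set E) (x y : V) : Prop :=
  ∃ l, DW G o x y l ∧ ∀ e ∈ l, e ∈ F

lemma dwin_trans {o : E → Bool} {F : Set E} {x y z : V}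
    (h1 : DWin G o F x y) (h2 : DWin G o F y z) : DWin G o F x z := by
  obtain ⟨l1, h1, m1⟩ := h1
  obtain ⟨l2, h2, m2⟩ := h2
  refine ⟨l1 ++ l2, dw_append h1 h2, fun e he => ?_⟩
  rcases List.mem_append.mp he with he | he
  · exact m1 e he
  · exact m2 e he

/-- A good pair: the covered vertices are strongly connected within `F`. -/
def GoodP (G : Multigraph V E) (F : Set E) (o : E → Bool) : Prop :=
  ∀ x ∈ Wset G F, ∀ y ∈ Wset G F, DWin G o F x y

lemma mem_Wset_of_memF {F : Set E} {e : E} (he : e ∈ F) :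
    G.fst e ∈ Wset G F ∧ G.snd e ∈ Wset G F :=
  ⟨⟨e, he, Or.inl rfl⟩, ⟨e, he, Or.inr rfl⟩⟩

lemma nodup_map_inj {α β : Type*} {f : α → β} {l : List α} (h : (l.map f).Nodup)
    {a b : α} (ha : a ∈ l) (hb : b ∈ l) (hf : f a = f b) : a = b := by
  by_contra hne
  have hp : l.Pairwise (fun a b => f a ≠ f b) := List.pairwise_map.mp h
  have hsym : Symmetric (fun a b : α => f a ≠ f b) := fun a b h1 h2 => h1 h2.symm
  haveI : Std.Symm (fun a b : α => f a ≠ f b) := ⟨fun a b h => hsym h⟩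
  exact (hp.forall ha hb hne) hf

end EgyedAux
section EgyedMain

open NW NW.Multigraph Classical

variable {V E : Type} {G : Multigraph V E}

lemma hincS {st : E × Bool} {u : V} (hic : G.Inc st.1 u) :
    u = G.src st ∨ u = G.dst st := by
  rcases step_ends (G := G) st with ⟨h1, h2⟩ | ⟨h1, h2⟩ <;> rcases hic with h | h
  · exact Or.inl (h1.trans h).symm
  · exact Or.inr (h2.trans h).symm
  · exact Or.inr (h2.trans h).symm
  · exact Or.inl (h1.trans h).symm

lemma key_extend {F : Set E} {o : E → Bool} (hgood : GoodP G F o)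
    (s : E × Bool) (heF : s.1 ∉ F)
    (hx : G.src s ∈ Wset G F ∨ Wset G F = ∅)
    {P : List (E × Bool)} (hP : GW G (G.dst s) (G.src s) P)
    (havoid : ∀ s' ∈ P, s'.1 ≠ s.1) :
    ∃ F' o', GoodP G F' o' ∧ F ⊆ F' ∧ (∀ e ∈ F, o e = o' e) ∧ s.1 ∈ F' := by
  classical
  set x₀ := G.src s with hx₀def
  set y₀ := G.dst s with hy₀def
  set T : Set V := Wset G F ∪ {x₀} with hTdef
  have hFsub : ∀ s' : E × Bool, G.src s' ∉ Wset G F → s'.1 ∉ F := by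
    intro s' hs' hmem
    rcases step_ends (G := G) s' with ⟨h1, h2⟩ | ⟨h1, h2⟩
    · exact hs' (h1 ▸ (mem_Wset_of_memF hmem).1)
    · exact hs' (h1 ▸ (mem_Wset_of_memF hmem).2)
  have hqex : ∃ z ∈ T, ∃ q, GW G y₀ z q ∧ (∀ s' ∈ q, s'.1 ≠ s.1 ∧ s'.1 ∉ F) ∧
      (q.map Prod.fst).Nodup := by
    by_cases hd : y₀ ∈ T
    · exact ⟨y₀, hd, [], GW.nil _, by simp, by simp⟩
    · have hxT : x₀ ∈ T := Or.inr rfl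
      obtain ⟨z, hz, q₀, hq₀, hsub, hsrc⟩ := gw_toSet hP hd hxT
      obtain ⟨q, hq, hsub', hnd⟩ := gw_simplify hq₀
      refine ⟨z, hz, q, hq, ?_, gw_nodup_fst hq hnd⟩
      intro s' hs'
      have h0 : s' ∈ q₀ := hsub' s' hs'
      exact ⟨havoid s' (hsub s' h0), hFsub s' fun hw => hsrc s' h0 (Or.inl hw)⟩
  obtain ⟨z, hz, q, hq, hqprop, hqnd⟩ := hqex
  set F' : Set E := (F ∪ {s.1}) ∪ {e | ∃ s' ∈ q, s'.1 = e} with hF'def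
  set o' : E → Bool := fun e =>
    if e = s.1 then s.2
    else if h : ∃ s', s' ∈ q ∧ s'.1 = e then h.choose.2 else o e with ho'def
  have ho'F : ∀ e ∈ F, o' e = o e := by
    intro e he
    have h1 : e ≠ s.1 := fun h => heF (h ▸ he)
    have h2 : ¬ ∃ s', s' ∈ q ∧ s'.1 = e := by
      rintro ⟨s', hs', rfl⟩; exact (hqprop s' hs').2 he
    simp only [ho'def, if_neg h1, dif_neg h2]
  have ho'q : ∀ s' ∈ q, o' s'.1 = s'.2 := by
    intro s' hs'
    have h1 : s'.1 ≠ s.1 := (hqprop s' hs').1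
    have h2 : ∃ t, t ∈ q ∧ t.1 = s'.1 := ⟨s', hs', rfl⟩
    have hspec := h2.choose_spec
    have heq : h2.choose = s' := nodup_map_inj hqnd hspec.1 hs' hspec.2
    simp only [ho'def, if_neg h1, dif_pos h2, heq]
  have ho'e : o' s.1 = s.2 := by simp [ho'def]
  have hFsub' : F ⊆ F' := fun e he => Or.inl (Or.inl he)
  have hsF' : s.1 ∈ F' := Or.inl (Or.inr rfl)
  have hqF' : ∀ s' ∈ q, s'.1 ∈ F' := fun s' hs' => Or.inr ⟨s', hs', rfl⟩
  have hlift : ∀ u ∈ Wset G F, ∀ v ∈ Wset G F, DWin G o' F' u v := by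
    intro u hu v hv
    obtain ⟨l, hdw, hmem⟩ := hgood u hu v hv
    exact ⟨l, dw_congr (fun e he => (ho'F e (hmem e he)).symm) hdw,
      fun e he => hFsub' (hmem e he)⟩
  have hx₀W : ∀ {u : V}, u ∈ Wset G F → x₀ ∈ Wset G F := by
    intro u hu
    rcases hx with h | h
    · exact h
    · exact absurd (h ▸ hu) (Set.notMem_empty u)
  have hzx : DWin G o' F' z x₀ := by
    rcases hz with hz | hz
    · exact hlift z hz x₀ (hx₀W hz)
    · rw [Set.mem_singleton_iff.mp hz]
      exact ⟨[], DW.nil _, by simp⟩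
  have hqdw : DWin G o' F' y₀ z := by
    refine ⟨q.map Prod.fst, gw_dw hq ho'q, fun e he => ?_⟩
    obtain ⟨s', hs', rfl⟩ := List.mem_map.mp he
    exact hqF' s' hs'
  have de : DW G o' x₀ y₀ [s.1] := by
    obtain ⟨ht, hh⟩ := tail_head_of_orient (G := G) ho'e
    exact DW.cons ht (hh ▸ DW.nil _)
  have hx₀y₀ : DWin G o' F' x₀ y₀ := ⟨[s.1], de, by simpa using hsF'⟩
  have hy₀x₀ : DWin G o' F' y₀ x₀ := dwin_trans hqdw hzx
  -- treat a step s' in q: reach from x₀ and to x₀ for both its ends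
  have hstep : ∀ s' ∈ q,
      (DWin G o' F' x₀ (G.src s') ∧ DWin G o' F' (G.src s') x₀) ∧
      (DWin G o' F' x₀ (G.dst s') ∧ DWin G o' F' (G.dst s') x₀) := by
    intro s' hs'
    obtain ⟨q₁, q₂, heqq, hq1, hq2⟩ := gw_split hq s' hs'
    have hmem1 : ∀ t ∈ q₁, t ∈ q := fun t ht => heqq ▸ List.mem_append_left _ ht
    have hmem2 : ∀ t ∈ q₂, t ∈ q := fun t ht =>
      heqq ▸ List.mem_append_right _ (List.mem_cons_of_mem _ ht)
    have dwin1 : DWin G o' F' y₀ (G.src s') := by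
      refine ⟨q₁.map Prod.fst, gw_dw hq1 (fun t ht => ho'q t (hmem1 t ht)), fun e he => ?_⟩
      obtain ⟨t, ht, rfl⟩ := List.mem_map.mp he
      exact hqF' t (hmem1 t ht)
    have dwin2 : DWin G o' F' (G.dst s') z := by
      refine ⟨q₂.map Prod.fst, gw_dw hq2 (fun t ht => ho'q t (hmem2 t ht)), fun e he => ?_⟩
      obtain ⟨t, ht, rfl⟩ := List.mem_map.mp he
      exact hqF' t (hmem2 t ht)
    have dwinS : DWin G o' F' (G.src s') (G.dst s') := by
      obtain ⟨ht, hh⟩ := tail_head_of_orient (G := G) (ho'q s' hs')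
      exact ⟨[s'.1], DW.cons ht (hh ▸ DW.nil _), by simpa using hqF' s' hs'⟩
    have hto_src : DWin G o' F' x₀ (G.src s') := dwin_trans hx₀y₀ dwin1
    have hfrom_dst : DWin G o' F' (G.dst s') x₀ := dwin_trans dwin2 hzx
    exact ⟨⟨hto_src, dwin_trans dwinS hfrom_dst⟩,
      ⟨dwin_trans hto_src dwinS, hfrom_dst⟩⟩
  have hub_from : ∀ u ∈ Wset G F', DWin G o' F' x₀ u := by
    rintro u ⟨e', he', hinc⟩
    rcases he' with (he' | he') | he'
    · have hu : u ∈ Wset G F := ⟨e', he', hinc⟩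
      exact hlift x₀ (hx₀W hu) u hu
    · rw [Set.mem_singleton_iff.mp he'] at hinc
      rcases hincS hinc with rfl | rfl
      · exact ⟨[], DW.nil _, by simp⟩
      · exact hx₀y₀
    · obtain ⟨s', hs', rfl⟩ := he'
      rcases hincS hinc with rfl | rfl
      · exact ((hstep s' hs').1).1
      · exact ((hstep s' hs').2).1
  have hub_to : ∀ u ∈ Wset G F', DWin G o' F' u x₀ := by
    rintro u ⟨e', he', hinc⟩
    rcases he' with (he' | he') | he'
    · have hu : u ∈ Wset G F := ⟨e', he', hinc⟩
      exact hlift u hu x₀ (hx₀W hu)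
    · rw [Set.mem_singleton_iff.mp he'] at hinc
      rcases hincS hinc with rfl | rfl
      · exact ⟨[], DW.nil _, by simp⟩
      · exact hy₀x₀
    · obtain ⟨s', hs', rfl⟩ := he'
      rcases hincS hinc with rfl | rfl
      · exact ((hstep s' hs').1).2
      · exact ((hstep s' hs').2).2
  exact ⟨F', o', fun u hu v hv => dwin_trans (hub_to u hu) (hub_from v hv),
    hFsub', fun e he => (ho'F e he).symm, hsF'⟩

end EgyedMain

open NW in
/-- Egyed: every (possibly infinite) connected bridgeless multigraph has a strongly
connected orientation. -/
theorem stmt16 {V E : Type} (G : Multigraph V E)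
    (hconn : G.Connected) (hbridge : ∀ e : E, ¬ G.IsBridge e) :
    ∃ o : E → Bool, ∀ x y : V, ∃ l, G.IsDiWalk o x y l := by
  classical
  -- Zorn's lemma on good partial orientations
  let S := {p : Set E × (E → Bool) // GoodP G p.1 p.2}
  let r : S → S → Prop := fun p q => p.1.1 ⊆ q.1.1 ∧ ∀ e ∈ p.1.1, p.1.2 e = q.1.2 e
  have htrans : ∀ {a b c : S}, r a b → r b c → r a c := by
    intro a b c h1 h2
    exact ⟨h1.1.trans h2.1, fun e he => (h1.2 e he).trans (h2.2 e (h1.1 he))⟩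
  have hub : ∀ c : Set S, IsChain r c → ∃ ub, ∀ a ∈ c, r a ub := by
    intro c hc
    set Fc : Set E := {e | ∃ p ∈ c, e ∈ p.1.1} with hFcdef
    set oc : E → Bool := fun e =>
      if h : ∃ p, p ∈ c ∧ e ∈ p.1.1 then h.choose.1.2 e else true with hocdef
    have hcons : ∀ p ∈ c, ∀ e ∈ p.1.1, oc e = p.1.2 e := by
      intro p hp e he
      have h : ∃ p', p' ∈ c ∧ e ∈ p'.1.1 := ⟨p, hp, he⟩
      simp only [hocdef, dif_pos h]
      obtain ⟨hp', he'⟩ := h.choose_spec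
      by_cases hpp : h.choose = p
      · rw [hpp]
      · rcases hc hp' hp hpp with hle | hle
        · exact hle.2 e he'
        · exact (hle.2 e he).symm
    have hgoodc : GoodP G Fc oc := by
      rintro u ⟨e₁, he₁, hinc₁⟩ v ⟨e₂, he₂, hinc₂⟩
      obtain ⟨p₁, hp₁, hep₁⟩ := he₁
      obtain ⟨p₂, hp₂, hep₂⟩ := he₂
      have hcomm : ∃ p ∈ c, e₁ ∈ p.1.1 ∧ e₂ ∈ p.1.1 := by
        by_cases hpp : p₁ = p₂
        · exact ⟨p₁, hp₁, hep₁, hpp ▸ hep₂⟩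
        · rcases hc hp₁ hp₂ hpp with h | h
          · exact ⟨p₂, hp₂, h.1 hep₁, hep₂⟩
          · exact ⟨p₁, hp₁, hep₁, h.1 hep₂⟩
      obtain ⟨p, hp, h1, h2⟩ := hcomm
      obtain ⟨l, hdw, hmem⟩ := p.2 u ⟨e₁, h1, hinc₁⟩ v ⟨e₂, h2, hinc₂⟩
      refine ⟨l, dw_congr (fun e he => (hcons p hp e (hmem e he)).symm) hdw,
        fun e he => ⟨p, hp, hmem e he⟩⟩
    exact ⟨⟨(Fc, oc), hgoodc⟩, fun p hp =>
      ⟨fun e he => ⟨p, hp, he⟩, fun e he => (hcons p hp e he).symm⟩⟩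
  obtain ⟨m, hm⟩ := exists_maximal_of_chains_bounded hub htrans
  refine ⟨m.1.2, fun x y => ?_⟩
  have stepA : ∀ s : E × Bool,
      (G.src s ∈ Wset G m.1.1 ∨ Wset G m.1.1 = ∅) → s.1 ∈ m.1.1 := by
    intro s hx
    by_contra heF
    obtain ⟨l0, hw0, hnot⟩ := not_not.mp (hbridge s.1)
    have hgw0 : GW G (G.fst s.1) (G.snd s.1) l0 := isWalk_gw hw0
    have havoid0 : ∀ s' ∈ l0, s'.1 ≠ s.1 :=
      fun s' hs' h => hnot (List.mem_map.mpr ⟨s', hs', h⟩)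
    have hPex : ∃ P, GW G (G.dst s) (G.src s) P ∧ ∀ s' ∈ P, s'.1 ≠ s.1 := by
      rcases s with ⟨e, b⟩
      cases b
      · exact ⟨l0, hgw0, havoid0⟩
      · refine ⟨l0.reverse.map flipS, gw_reverse hgw0, ?_⟩
        intro s' hs'
        obtain ⟨s'', hs'', rfl⟩ := List.mem_map.mp hs'
        exact havoid0 s'' (List.mem_reverse.mp hs'')
    obtain ⟨P, hPgw, hPav⟩ := hPex
    obtain ⟨F', o', hgood', hsub', hagree, hmem'⟩ := key_extend m.2 s heF hx hPgw hPav
    have hr : r m ⟨(F', o'), hgood'⟩ := ⟨hsub', hagree⟩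
    exact heF ((hm _ hr).1 hmem')
  by_cases hxy : x = y
  · subst hxy
    exact ⟨[], dw_isDiWalk (DW.nil x)⟩
  · obtain ⟨l, hl⟩ := hconn x y
    have hgw := isWalk_gw hl
    have hW : Wset G m.1.1 ≠ ∅ := by
      cases hgw with
      | nil => exact absurd rfl hxy
      | @cons _ _ s l' hsx h =>
        intro hemp
        have hsF := stepA s (Or.inr hemp)
        exact absurd (hemp ▸ (mem_Wset_of_memF hsF).1) (Set.notMem_empty _)
    have huniv : ∀ v : V, v ∈ Wset G m.1.1 := by
      intro v
      by_contra hv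
      obtain ⟨w, hw⟩ := Set.nonempty_iff_ne_empty.mpr hW
      obtain ⟨lw, hlw⟩ := hconn w v
      obtain ⟨t, ht, hsrc, hdst⟩ := gw_cross (isWalk_gw hlw) hw hv
      have htF : t.1 ∈ m.1.1 := stepA t (Or.inl hsrc)
      apply hdst
      rcases step_ends (G := G) t with ⟨h1, h2⟩ | ⟨h1, h2⟩
      · exact h2 ▸ (mem_Wset_of_memF htF).2
      · exact h2 ▸ (mem_Wset_of_memF htF).1
    obtain ⟨ld, hdw, -⟩ := m.2 x (huniv x) y (huniv y)
    exact ⟨ld, dw_isDiWalk hdw⟩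
end
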